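/- arXiv:2106.04049 — 7 statements merged into one kernel-verified Lean document; each statement's English description precedes it below -/
import Mathlib

section
/- Let p ≥ 3 be a prime, λ ∈ F_p, and let v ∈ F_p^n be a nonzero vector. Then the probability that (M_n − λ·I_n)·v has at most ⌊n/4⌋ nonzero coordinates is at most 2^{−(n−⌊n/4⌋)} · binom(n, ⌊n/4⌋). -/
open Finset Matrix

noncomputable section

/-- The sign `±1` associated to a Boolean. -/
def signb (R : Type*) [Ring R] (b : Bool) : R := if b then 1 else -1

open Classical in
/-- Uniform/counting probability of an event on a finite sample space. -/
def prob {Ω : Type*} [Fintype Ω] (E : Ω → Prop) : ℝ :=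
  ((Finset.univ.filter E).card : ℝ) / (Fintype.card Ω : ℝ)

/-- The symmetric random sign matrix determined by the Boolean data `ω`
(only the entries `ω i j` with `i ≤ j` are used); it is uniformly distributed
over symmetric `±1` matrices when `ω` is uniform. -/
def symMat (R : Type*) [Ring R] {n : ℕ} (ω : Fin n → Fin n → Bool) :
    Matrix (Fin n) (Fin n) R :=
  Matrix.of fun i j => signb R (ω (min i j) (max i j))

/-- Atom probability of a vector over `ZMod p` w.r.t. i.i.d. Rademacher signs. -/
def rho (p : ℕ) {ι : Type*} [Fintype ι] [DecidableEq ι] (w : ι → ZMod p) : ℝ :=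
  ⨆ r : ZMod p, prob (fun ξ : ι → Bool => ∑ i, signb (ZMod p) (ξ i) * w i = r)

/-- Discrepancy of a vector over `ZMod p` w.r.t. i.i.d. Rademacher signs. -/
def disc (p : ℕ) {ι : Type*} [Fintype ι] [DecidableEq ι] (w : ι → ZMod p) : ℝ :=
  ⨆ x : ZMod p,
    |prob (fun ξ : ι → Bool => ∑ i, signb (ZMod p) (ξ i) * w i = x) - 1 / (p : ℝ)|

section Aux
variable {n p : ℕ}

lemma minmax_aux {a b c d : Fin n} (h : (min a b, max a b) = (min c d, max c d)) :
    (a = c ∧ b = d) ∨ (a = d ∧ b = c) := by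
  have h1 : min a b = min c d := congrArg Prod.fst h
  have h2 : max a b = max c d := congrArg Prod.snd h
  rcases le_total a b with hab | hab <;> rcases le_total c d with hcd | hcd
  · rw [min_eq_left hab, min_eq_left hcd] at h1
    rw [max_eq_right hab, max_eq_right hcd] at h2
    exact Or.inl ⟨h1, h2⟩
  · rw [min_eq_left hab, min_eq_right hcd] at h1
    rw [max_eq_right hab, max_eq_left hcd] at h2
    exact Or.inr ⟨h1, h2⟩
  · rw [min_eq_right hab, min_eq_left hcd] at h1
    rw [max_eq_left hab, max_eq_right hcd] at h2
    exact Or.inr ⟨h2, h1⟩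
  · rw [min_eq_right hab, min_eq_right hcd] at h1
    rw [max_eq_left hab, max_eq_left hcd] at h2
    exact Or.inl ⟨h2, h1⟩

lemma signb_inj (hp3 : 3 ≤ p) : Function.Injective (signb (ZMod p)) := by
  have hne : (1 : ZMod p) ≠ -1 := by
    intro h
    have h2 : ((2 : ℕ) : ZMod p) = 0 := by push_cast; linear_combination h
    rw [ZMod.natCast_eq_zero_iff] at h2
    have := Nat.le_of_dvd (by norm_num) h2
    omega
  intro a b hab
  cases a <;> cases b <;> simp [signb] at hab ⊢ <;>
    first
      | exact absurd hab.symm hne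
      | exact absurd hab hne

open Classical in
def patch (k : Fin n) (T : Finset (Fin n)) (ω : Fin n → Fin n → Bool)
    (b : {i // i ∈ T} → Bool) : Fin n → Fin n → Bool :=
  fun q r => if h : ∃ i : {i // i ∈ T}, (min (i : Fin n) k, max (i : Fin n) k) = (q, r)
    then b h.choose else ω q r

lemma patch_apply_e (k : Fin n) (T : Finset (Fin n)) (ω : Fin n → Fin n → Bool)
    (b : {i // i ∈ T} → Bool) (i : {i // i ∈ T}) :
    patch k T ω b (min (i : Fin n) k) (max (i : Fin n) k) = b i := by
  have hex : ∃ j : {i // i ∈ T},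
      (min (j : Fin n) k, max (j : Fin n) k) = (min (i : Fin n) k, max (i : Fin n) k) := ⟨i, rfl⟩
  rw [patch, dif_pos hex]
  congr 1
  rcases minmax_aux hex.choose_spec with ⟨h1, _⟩ | ⟨h1, h2⟩
  · exact Subtype.ext h1
  · exact Subtype.ext (h1.trans h2)

lemma patch_apply_off (k : Fin n) (T : Finset (Fin n)) (ω : Fin n → Fin n → Bool)
    (b : {i // i ∈ T} → Bool) {q r : Fin n}
    (h : ∀ i ∈ T, (min i k, max i k) ≠ (q, r)) :
    patch k T ω b q r = ω q r := by
  rw [patch, dif_neg]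
  rintro ⟨⟨i, hi⟩, he⟩
  exact h i hi he

lemma unique_fiber (hp : p.Prime) (hp3 : 3 ≤ p) (lam : ZMod p) (v : Fin n → ZMod p) (k : Fin n)
    (hk : v k ≠ 0) (T : Finset (Fin n)) (ω ω' : Fin n → Fin n → Bool)
    (hoff : ∀ q r : Fin n, (∀ i ∈ T, (min i k, max i k) ≠ (q, r)) → ω q r = ω' q r)
    (hev : ∀ i ∈ T, ∑ j, signb (ZMod p) (ω (min i j) (max i j)) * v j = lam * v i)
    (hev' : ∀ i ∈ T, ∑ j, signb (ZMod p) (ω' (min i j) (max i j)) * v j = lam * v i) :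
    ω = ω' := by
  haveI := Fact.mk hp
  have key : ∀ i ∈ T,
      (∀ j : Fin n, j ≠ k → ω (min i j) (max i j) = ω' (min i j) (max i j)) →
      ω (min i k) (max i k) = ω' (min i k) (max i k) := by
    intro i hi hagree
    have hsum : ∑ j : Fin n, (signb (ZMod p) (ω (min i j) (max i j))
        - signb (ZMod p) (ω' (min i j) (max i j))) * v j = 0 := by
      simp only [sub_mul, Finset.sum_sub_distrib, hev i hi, hev' i hi, sub_self]
    rw [Finset.sum_eq_single k (fun j _ hj => by rw [hagree j hj, sub_self, zero_mul])
      (fun h => absurd (mem_univ k) h)] at hsum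
    exact signb_inj hp3 (sub_eq_zero.mp ((mul_eq_zero.mp hsum).resolve_right hk))
  have hA : ∀ i ∈ T, i ≠ k → ω (min i k) (max i k) = ω' (min i k) (max i k) := by
    intro i hi hik
    refine key i hi fun j hj => ?_
    refine hoff _ _ fun l hl hlp => ?_
    rcases minmax_aux hlp with ⟨_, h2⟩ | ⟨_, h2⟩
    · exact hj h2.symm
    · exact hik h2.symm
  have hB : k ∈ T → ω (min k k) (max k k) = ω' (min k k) (max k k) := by
    intro hkT
    refine key k hkT fun j hj => ?_
    by_cases hjT : j ∈ T
    · rw [min_comm k j, max_comm k j]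
      exact hA j hjT hj
    · refine hoff _ _ fun l hl hlp => ?_
      rcases minmax_aux hlp with ⟨_, h2⟩ | ⟨h1, _⟩
      · exact hj h2.symm
      · exact hjT (h1 ▸ hl)
  funext q r
  by_cases h : ∃ i ∈ T, (min i k, max i k) = (q, r)
  · obtain ⟨i, hi, hiq⟩ := h
    by_cases hik : i = k
    · subst hik
      cases hiq
      exact hB hi
    · cases hiq
      exact hA i hi hik
  · push_neg at h
    exact hoff q r h

lemma count_mul_le (hp : p.Prime) (hp3 : 3 ≤ p) (lam : ZMod p) (v : Fin n → ZMod p)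
    (k : Fin n) (hk : v k ≠ 0) (T : Finset (Fin n))
    (S : Finset (Fin n → Fin n → Bool))
    (hS : ∀ ω ∈ S, ∀ i ∈ T,
      ∑ j, signb (ZMod p) (ω (min i j) (max i j)) * v j = lam * v i) :
    S.card * 2 ^ T.card ≤ Fintype.card (Fin n → Fin n → Bool) := by
  classical
  have hinj : Function.Injective
      (fun x : ↥S × ({i // i ∈ T} → Bool) => patch k T (x.1 : _) x.2) := by
    rintro ⟨⟨ω, hω⟩, b⟩ ⟨⟨ω', hω'⟩, b'⟩ h
    simp only at h
    have hb : b = b' := by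
      funext i
      have := congrFun (congrFun h (min (i : Fin n) k)) (max (i : Fin n) k)
      rwa [patch_apply_e, patch_apply_e] at this
    have hωeq : ω = ω' := by
      refine unique_fiber hp hp3 lam v k hk T ω ω' ?_ (hS ω hω) (hS ω' hω')
      intro q r hq
      have := congrFun (congrFun h q) r
      rwa [patch_apply_off _ _ _ _ hq, patch_apply_off _ _ _ _ hq] at this
    subst hωeq; subst hb; rfl
  have h := Fintype.card_le_of_injective _ hinj
  simpa [Fintype.card_coe, Fintype.card_fun] using h

end Aux


/-- For a fixed nonzero `v ∈ F_p^n`, the probability that `(M_n - λ I_n) v` has at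
most `⌊n/4⌋` nonzero coordinates is at most `2^{-(n - ⌊n/4⌋)}·C(n, ⌊n/4⌋)`. -/
theorem sparse_image_probability (n p : ℕ) (hp : p.Prime) (hp3 : 3 ≤ p)
    (lam : ZMod p) (v : Fin n → ZMod p) (hv : v ≠ 0) :
    prob (fun ω : Fin n → Fin n → Bool =>
        {i | ((symMat (ZMod p) ω - lam • (1 : Matrix (Fin n) (Fin n) (ZMod p))) *ᵥ v) i
          ≠ 0}.ncard ≤ n / 4)
      ≤ (n.choose (n / 4) : ℝ) / 2 ^ (n - n / 4) := by
  classical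
  obtain ⟨k, hk⟩ := Function.ne_iff.mp hv
  set m := n / 4 with hm
  set c := Fintype.card (Fin n → Fin n → Bool) with hc
  have hcpos : (0 : ℝ) < (c : ℝ) := by exact_mod_cast Fintype.card_pos
  have hrow : ∀ (ω : Fin n → Fin n → Bool) (i : Fin n),
      ((symMat (ZMod p) ω - lam • (1 : Matrix (Fin n) (Fin n) (ZMod p))) *ᵥ v) i
        = (∑ j, signb (ZMod p) (ω (min i j) (max i j)) * v j) - lam * v i := by
    intro ω i
    rw [Matrix.sub_mulVec, Matrix.smul_mulVec, Matrix.one_mulVec]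
    simp [Matrix.mulVec, dotProduct, symMat, Pi.sub_apply, Pi.smul_apply, smul_eq_mul]
  set Q : Finset (Fin n) → (Fin n → Fin n → Bool) → Prop := fun T ω =>
    ∀ i ∈ T, ∑ j, signb (ZMod p) (ω (min i j) (max i j)) * v j = lam * v i with hQ
  have hsub : (univ.filter (fun ω : Fin n → Fin n → Bool =>
        {i | ((symMat (ZMod p) ω - lam • (1 : Matrix (Fin n) (Fin n) (ZMod p))) *ᵥ v) i
          ≠ 0}.ncard ≤ m))
      ⊆ (univ.powersetCard (n - m)).biUnion (fun T => univ.filter (Q T)) := by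
    intro ω hω
    have hP := (mem_filter.mp hω).2
    have hnc : (univ.filter (fun i =>
        ((symMat (ZMod p) ω - lam • (1 : Matrix (Fin n) (Fin n) (ZMod p))) *ᵥ v) i ≠ 0)).card
        ≤ m := by
      rwa [Set.ncard_eq_toFinset_card', Set.toFinset_setOf] at hP
    have hcc := Finset.card_filter_add_card_filter_not
      (s := (univ : Finset (Fin n)))
      (p := fun i => ((symMat (ZMod p) ω - lam • (1 : Matrix (Fin n) (Fin n) (ZMod p))) *ᵥ v) i = 0)
    simp only [ne_eq] at hnc
    rw [Finset.card_univ, Fintype.card_fin] at hcc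
    have hzero : n - m ≤ (univ.filter (fun i =>
        ((symMat (ZMod p) ω - lam • (1 : Matrix (Fin n) (Fin n) (ZMod p))) *ᵥ v) i = 0)).card := by
      omega
    obtain ⟨T, hTs, hTc⟩ := Finset.exists_subset_card_eq hzero
    refine mem_biUnion.mpr ⟨T, mem_powersetCard.mpr ⟨subset_univ T, hTc⟩,
      mem_filter.mpr ⟨mem_univ _, ?_⟩⟩
    intro i hi
    have h0 := (mem_filter.mp (hTs hi)).2
    rw [hrow] at h0
    exact sub_eq_zero.mp h0
  have hcard : ((univ.filter (fun ω : Fin n → Fin n → Bool =>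
        {i | ((symMat (ZMod p) ω - lam • (1 : Matrix (Fin n) (Fin n) (ZMod p))) *ᵥ v) i
          ≠ 0}.ncard ≤ m)).card : ℝ)
      ≤ (n.choose (n - m) : ℝ) * ((c : ℝ) / 2 ^ (n - m)) := by
    have h1 := Finset.card_le_card hsub
    have h2 := Finset.card_biUnion_le (s := univ.powersetCard (n - m))
      (t := fun T => univ.filter (Q T))
    have h3 : ∀ T ∈ univ.powersetCard (n - m),
        ((univ.filter (Q T)).card : ℝ) ≤ (c : ℝ) / 2 ^ (n - m) := by
      intro T hT
      have hTc : T.card = n - m := (mem_powersetCard.mp hT).2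
      have h := count_mul_le hp hp3 lam v k hk T (univ.filter (Q T))
        (fun ω hω => (mem_filter.mp hω).2)
      rw [hTc] at h
      rw [le_div_iff₀ (by positivity)]
      calc ((univ.filter (Q T)).card : ℝ) * 2 ^ (n - m)
          = (((univ.filter (Q T)).card * 2 ^ (n - m) : ℕ) : ℝ) := by push_cast; ring
        _ ≤ (c : ℝ) := by exact_mod_cast h
    calc ((univ.filter (fun ω : Fin n → Fin n → Bool =>
          {i | ((symMat (ZMod p) ω - lam • (1 : Matrix (Fin n) (Fin n) (ZMod p))) *ᵥ v) i
            ≠ 0}.ncard ≤ m)).card : ℝ)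
        ≤ (((univ.powersetCard (n - m)).biUnion (fun T => univ.filter (Q T))).card : ℝ) := by
          exact_mod_cast h1
      _ ≤ ((∑ T ∈ univ.powersetCard (n - m), (univ.filter (Q T)).card : ℕ) : ℝ) := by
          exact_mod_cast h2
      _ = ∑ T ∈ univ.powersetCard (n - m), ((univ.filter (Q T)).card : ℝ) := by push_cast; rfl
      _ ≤ ∑ T ∈ univ.powersetCard (n - m), ((c : ℝ) / 2 ^ (n - m)) :=
          Finset.sum_le_sum h3
      _ = (n.choose (n - m) : ℝ) * ((c : ℝ) / 2 ^ (n - m)) := by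
          rw [Finset.sum_const, Finset.card_powersetCard, Finset.card_univ, Fintype.card_fin,
            nsmul_eq_mul]
  rw [prob]
  rw [Finset.filter_congr_decidable]
  calc ((univ.filter (fun ω : Fin n → Fin n → Bool =>
        {i | ((symMat (ZMod p) ω - lam • (1 : Matrix (Fin n) (Fin n) (ZMod p))) *ᵥ v) i
          ≠ 0}.ncard ≤ m)).card : ℝ) / (c : ℝ)
      ≤ ((n.choose (n - m) : ℝ) * ((c : ℝ) / 2 ^ (n - m))) / (c : ℝ) := by
        gcongr
    _ = (n.choose (n - m) : ℝ) / 2 ^ (n - m) := by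
        field_simp
    _ = (n.choose m : ℝ) / 2 ^ (n - m) := by
        rw [Nat.choose_symm (Nat.div_le_self n 4)]
end
end

section
/- Let p be an odd prime, m ≥ 1, and b = (b_1,…,b_m) ∈ F_p^m. Then disc_{F_p}(b) ≤ (1/p)·Σ_{ℓ ∈ F_p, ℓ≠0} ∏_{j=1}^{m} |cos(2π·(ℓb_j)^/p)|, and moreover disc_{F_p}(b) ≤ max_{ℓ ∈ F_p, ℓ≠0} exp(−Σ_{j=1}^{m} ||(ℓb_j)^/p||²_{ℝ/ℤ}). -/
open Finset Matrix

noncomputable section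

open Real

/-- Distance from a real number to the nearest integer (the `ℝ/ℤ` norm). -/
def distRZ (x : ℝ) : ℝ := |x - round x|

section aux

lemma distRZ_add_int (x : ℝ) (k : ℤ) : distRZ (x + k) = distRZ x := by
  unfold distRZ
  rw [round_add_intCast]
  congr 1
  push_cast
  ring

lemma abs_cos_pi_le (x : ℝ) : |Real.cos (π * x)| ≤ Real.exp (-(2 * distRZ x ^ 2)) := by
  set y : ℝ := x - round x with hy
  have hy2 : |y| ≤ 1/2 := abs_sub_round x
  have hx : x = y + (round x : ℤ) := by rw [hy]; ring
  have h1 : |Real.cos (π * x)| = |Real.cos (π * y)| := by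
    have : π * x = (round x : ℤ) * π - (-(π * y)) := by rw [hy]; ring
    rw [this, Real.cos_int_mul_pi_sub, Real.cos_neg, abs_mul]
    have : |(-1 : ℝ) ^ round x| = 1 := by
      rcases Int.even_or_odd (round x) with h | h
      · rw [h.neg_one_zpow]; simp
      · rw [Odd.neg_one_zpow h]; simp
    rw [this, one_mul]
  have hpiy : |π * y| ≤ π := by
    rw [abs_mul, abs_of_pos Real.pi_pos]
    nlinarith [Real.pi_pos]
  have hnn : 0 ≤ Real.cos (π * y) := by
    apply Real.cos_nonneg_of_neg_pi_div_two_le_of_le <;>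
      · cases abs_le.mp hy2 with
        | intro ha hb => nlinarith [Real.pi_pos]
  have h2 : Real.cos (π * y) ≤ 1 - 2 * y ^ 2 := by
    have := Real.cos_le_one_sub_mul_cos_sq hpiy
    have hpi := Real.pi_pos
    calc Real.cos (π * y) ≤ 1 - 2 / π ^ 2 * (π * y) ^ 2 := this
      _ = 1 - 2 * y ^ 2 := by field_simp
  have h3 : (1 : ℝ) - 2 * y ^ 2 ≤ Real.exp (-(2 * y ^ 2)) := by
    have := Real.add_one_le_exp (-(2 * y ^ 2)); linarith
  have hd : distRZ x ^ 2 = y ^ 2 := by rw [distRZ, ← hy, sq_abs]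
  rw [h1, abs_of_nonneg hnn, hd]
  exact h2.trans h3

variable {p : ℕ} [NeZero p]

open Complex in
lemma psi_apply (a : ZMod p) :
    ZMod.stdAddChar a = Complex.exp ((2 * π * a.val / p : ℝ) * Complex.I) := by
  rw [ZMod.stdAddChar_apply, ZMod.toCircle_apply]
  push_cast
  ring_nf

lemma psi_abs (a : ZMod p) : ‖ZMod.stdAddChar a‖ = 1 := by
  rw [psi_apply, Complex.norm_exp_ofReal_mul_I]

open Complex in
lemma psi_add_neg (a : ZMod p) :
    ZMod.stdAddChar a + ZMod.stdAddChar (-a)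
      = 2 * ((Real.cos (2 * π * a.val / p) : ℝ) : ℂ) := by
  rw [AddChar.map_neg_eq_inv, psi_apply, ← Complex.exp_neg]
  rw [neg_mul_eq_neg_mul, ← Complex.ofReal_neg, Complex.exp_mul_I, Complex.exp_mul_I,
    Complex.ofReal_neg, Complex.cos_neg, Complex.sin_neg, Complex.ofReal_cos]
  ring

/-- The `ℝ/ℤ` distance comparison: `2 * a.val / p` and `(2*a).val / p` differ by an integer. -/
lemma distRZ_two_val (a : ZMod p) :
    distRZ (2 * (a.val : ℝ) / p) = distRZ ((((2 * a : ZMod p)).val : ℝ) / p) := by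
  have hp : (p : ℝ) ≠ 0 := Nat.cast_ne_zero.mpr (NeZero.ne p)
  have hval : ((2 * a : ZMod p)).val = (2 * a.val) % p := by
    rw [two_mul, ZMod.val_add, two_mul]
  have hnat : (2 * a.val) % p + p * ((2 * a.val) / p) = 2 * a.val := Nat.mod_add_div _ _
  have hcast : (((2 * a.val) % p : ℕ) : ℝ) + (p : ℝ) * ((2 * a.val / p : ℕ) : ℝ)
      = 2 * (a.val : ℝ) := by exact_mod_cast congrArg (Nat.cast (R := ℝ)) hnat
  have : 2 * (a.val : ℝ) / p = (((2 * a : ZMod p)).val : ℝ) / p + ((2 * a.val / p : ℕ) : ℤ) := by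
    have h2 : 2 * (a.val : ℝ) = ((2 * a.val % p : ℕ) : ℝ) + ((2 * a.val / p : ℕ) : ℝ) * p := by
      linarith [hcast]
    rw [hval, h2, add_div, mul_div_assoc, div_self hp, mul_one, Int.cast_natCast]
  rw [this, distRZ_add_int]

lemma abs_cos_le_exp (a : ZMod p) :
    |Real.cos (2 * π * (a.val : ℝ) / p)|
      ≤ Real.exp (-(2 * distRZ ((((2 * a : ZMod p)).val : ℝ) / p) ^ 2)) := by
  have h : 2 * π * (a.val : ℝ) / p = π * (2 * (a.val : ℝ) / p) := by ring
  rw [h, ← distRZ_two_val]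
  exact abs_cos_pi_le _

open Complex in
lemma count_id (p : ℕ) [Fact p.Prime] (m : ℕ) (b : Fin m → ZMod p) (x : ZMod p) :
    ((Finset.univ.filter
        (fun ξ : Fin m → Bool => ∑ i, signb (ZMod p) (ξ i) * b i = x)).card : ℂ) * p
      = ∑ l : ZMod p, ZMod.stdAddChar (-(l * x)) *
          ∏ j, (ZMod.stdAddChar (l * b j) + ZMod.stdAddChar (-(l * b j))) := by
  classical
  set ψ : AddChar (ZMod p) ℂ := ZMod.stdAddChar with hψ
  have hprim := ZMod.isPrimitive_stdAddChar p
  set S : (Fin m → Bool) → ZMod p := fun ξ => ∑ i, signb (ZMod p) (ξ i) * b i with hS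
  have key : ∀ ξ : Fin m → Bool,
      (if S ξ = x then (p : ℂ) else 0) = ∑ l : ZMod p, ψ (l * (S ξ - x)) := by
    intro ξ
    rw [AddChar.sum_mulShift _ hprim]
    simp only [ZMod.card, sub_eq_zero]
    by_cases h : S ξ = x <;> simp [h]
  have lhs : ((Finset.univ.filter (fun ξ : Fin m → Bool => S ξ = x)).card : ℂ) * p
      = ∑ ξ : Fin m → Bool, (if S ξ = x then (p : ℂ) else 0) := by
    rw [Finset.sum_ite, Finset.sum_const, Finset.sum_const_zero, add_zero, nsmul_eq_mul]
  rw [lhs]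
  simp_rw [key]
  rw [Finset.sum_comm]
  refine Finset.sum_congr rfl fun l _ => ?_
  have step1 : ∀ ξ : Fin m → Bool, ψ (l * (S ξ - x)) = ψ (-(l * x)) * ψ (l * S ξ) := by
    intro ξ
    rw [← AddChar.map_add_eq_mul]
    congr 1; ring
  simp_rw [step1, ← Finset.mul_sum]
  congr 1
  have psum : ∀ {ι : Type} (s : Finset ι) (f : ι → ZMod p),
      ψ (∑ i ∈ s, f i) = ∏ i ∈ s, ψ (f i) := by
    intro ι s f
    induction s using Finset.cons_induction with
    | empty => simp
    | cons a s ha ih => rw [Finset.sum_cons, Finset.prod_cons, AddChar.map_add_eq_mul, ih]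
  have step2 : ∀ ξ : Fin m → Bool, ψ (l * S ξ) = ∏ i, ψ (l * (signb (ZMod p) (ξ i) * b i)) := by
    intro ξ
    rw [hS]; simp only [Finset.mul_sum]; exact psum _ _
  simp_rw [step2]
  rw [← Fintype.prod_sum (fun (i : Fin m) (c : Bool) => ψ (l * (signb (ZMod p) c * b i)))]
  refine Finset.prod_congr rfl fun j _ => ?_
  rw [Fintype.sum_bool]
  simp [signb]

open Complex in
lemma perx (p : ℕ) [Fact p.Prime] (m : ℕ) (b : Fin m → ZMod p) (x : ZMod p) :
    |prob (fun ξ : Fin m → Bool => ∑ i, signb (ZMod p) (ξ i) * b i = x) - 1 / (p : ℝ)|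
      ≤ (1 / (p : ℝ)) *
        ∑ l ∈ Finset.univ.filter (fun l : ZMod p => l ≠ 0),
          ∏ j, |Real.cos (2 * π * (((l * b j).val : ℝ)) / p)| := by
  classical
  have hp : (0 : ℝ) < p := Nat.cast_pos.mpr (Fact.out (p := p.Prime)).pos
  have h2m : (0 : ℝ) < 2 ^ m := by positivity
  set ψ : AddChar (ZMod p) ℂ := ZMod.stdAddChar with hψ
  set C : ℕ := (Finset.univ.filter
      (fun ξ : Fin m → Bool => ∑ i, signb (ZMod p) (ξ i) * b i = x)).card with hCdef
  have hprob : prob (fun ξ : Fin m → Bool => ∑ i, signb (ZMod p) (ξ i) * b i = x)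
      = (C : ℝ) / 2 ^ m := by
    rw [prob]
    congr 1
    · norm_cast
      rw [hCdef]
      congr!
    · simp
  set T : ℂ := ∑ l ∈ Finset.univ.filter (fun l : ZMod p => l ≠ 0),
      ψ (-(l * x)) * ∏ j, (ψ (l * b j) + ψ (-(l * b j))) with hT
  have hC : (C : ℂ) * p = 2 ^ m + T := by
    rw [hCdef, count_id p m b x]
    have h0 : ∀ l : ZMod p, l = 0 →
        ZMod.stdAddChar (-(l * x)) *
          ∏ j, (ZMod.stdAddChar (l * b j) + ZMod.stdAddChar (-(l * b j))) = 2 ^ m := by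
      intro l hl
      subst hl
      simp [AddChar.map_zero_eq_one]
      norm_num
    rw [← Finset.add_sum_erase _ _ (Finset.mem_univ (0 : ZMod p)), h0 0 rfl, hT]
    rw [Finset.filter_ne']
  have key : |((C : ℝ) / 2 ^ m - 1 / p)| = ‖T‖ / (p * 2 ^ m) := by
    have h1 : (((C : ℝ) / 2 ^ m - 1 / p : ℝ) : ℂ) = T / (p * 2 ^ m) := by
      have hpne : (p : ℂ) ≠ 0 := by
        exact_mod_cast Nat.cast_ne_zero.mpr (Fact.out (p := p.Prime)).pos.ne'
      have h2ne : (2 : ℂ) ^ m ≠ 0 := pow_ne_zero _ two_ne_zero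
      have hT2 : T = (C : ℂ) * p - 2 ^ m := by linear_combination -hC
      push_cast
      rw [hT2, div_sub_div _ _ h2ne hpne,
        div_eq_div_iff (mul_ne_zero h2ne hpne) (mul_ne_zero hpne h2ne)]
      ring
    rw [← Real.norm_eq_abs, ← Complex.norm_real, h1, norm_div]
    congr 1
    rw [show ((p : ℂ) * 2 ^ m) = (((p : ℝ) * 2 ^ m : ℝ) : ℂ) by push_cast; ring,
      Complex.norm_real, Real.norm_eq_abs, abs_of_pos (by positivity)]
  have habsT : ‖T‖ ≤ 2 ^ m *
      ∑ l ∈ Finset.univ.filter (fun l : ZMod p => l ≠ 0),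
        ∏ j, |Real.cos (2 * π * (((l * b j).val : ℝ)) / p)| := by
    rw [hT, Finset.mul_sum]
    refine (norm_sum_le _ _).trans (Finset.sum_le_sum fun l _ => ?_)
    rw [norm_mul, psi_abs, one_mul, norm_prod]
    have : ∀ j : Fin m, ‖ψ (l * b j) + ψ (-(l * b j))‖
        = 2 * |Real.cos (2 * π * (((l * b j).val : ℝ)) / p)| := by
      intro j
      rw [hψ, psi_add_neg, norm_mul, Complex.norm_real, Real.norm_eq_abs, Complex.norm_two]
    rw [Finset.prod_congr rfl fun j _ => this j, Finset.prod_mul_distrib,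
      Finset.prod_const, Finset.card_univ, Fintype.card_fin]
  rw [hprob, key]
  rw [div_le_iff₀ (by positivity)]
  calc ‖T‖ ≤ _ := habsT
    _ = 1 / (p:ℝ) * (∑ l ∈ Finset.univ.filter (fun l : ZMod p => l ≠ 0),
          ∏ j, |Real.cos (2 * π * (((l * b j).val : ℝ)) / p)|) * ((p:ℝ) * 2 ^ m) := by
      field_simp

end aux

open Classical in
/-- The Fourier-analytic bound on the discrepancy of a vector `b ∈ F_p^m`: it is
bounded by the cosine sum over nonzero frequencies, and by
`max_{ℓ ≠ 0} exp(-∑_j ‖ℓb_j/p‖²_{ℝ/ℤ})`. -/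
theorem disc_fourier_bound (p : ℕ) [Fact p.Prime] (hodd : Odd p) (m : ℕ) (hm : 1 ≤ m)
    (b : Fin m → ZMod p) :
    disc p b ≤ (1 / (p : ℝ)) *
        ∑ l ∈ Finset.univ.filter (fun l : ZMod p => l ≠ 0),
          ∏ j, |Real.cos (2 * π * (((l * b j).val : ℝ)) / p)| ∧
    disc p b ≤ ⨆ l : {l : ZMod p // l ≠ 0},
        Real.exp (-(∑ j, distRZ (((l.1 * b j).val : ℝ) / p) ^ 2)) := by
  have hp : p.Prime := Fact.out
  have hp2 : 2 ≤ p := hp.two_le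
  have first : disc p b ≤ (1 / (p : ℝ)) *
      ∑ l ∈ Finset.univ.filter (fun l : ZMod p => l ≠ 0),
        ∏ j, |Real.cos (2 * π * (((l * b j).val : ℝ)) / p)| := by
    rw [disc]
    exact ciSup_le fun x => perx p m b x
  refine ⟨first, first.trans ?_⟩
  -- now bound the cosine sum by the sup of exponentials
  have hnontriv : Nontrivial (ZMod p) := ZMod.nontrivial_iff.mpr hp.one_lt.ne'
  have hne : Nonempty {l : ZMod p // l ≠ 0} := ⟨⟨1, one_ne_zero⟩⟩
  set E : ℝ := ⨆ l : {l : ZMod p // l ≠ 0},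
      Real.exp (-(∑ j, distRZ (((l.1 * b j).val : ℝ) / p) ^ 2)) with hE
  have hbdd : BddAbove (Set.range fun l : {l : ZMod p // l ≠ 0} =>
      Real.exp (-(∑ j, distRZ (((l.1 * b j).val : ℝ) / p) ^ 2))) :=
    Set.Finite.bddAbove (Set.finite_range _)
  have hE0 : 0 ≤ E := le_trans (Real.exp_pos _).le (le_ciSup hbdd hne.some)
  have hp3 : 3 ≤ p := by
    have h2 := hp.two_le
    have ho := Nat.odd_iff.mp hodd
    omega
  have htwo : (2 : ZMod p) ≠ 0 := by
    have h1 : ((2 : ℕ) : ZMod p) ≠ 0 := by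
      rw [Ne, ZMod.natCast_eq_zero_iff]
      intro hdvd
      have := Nat.le_of_dvd (by norm_num) hdvd
      omega
    simpa using h1
  have hterm : ∀ l : ZMod p, l ≠ 0 →
      (∏ j, |Real.cos (2 * π * (((l * b j).val : ℝ)) / p)|) ≤ E := by
    intro l hl
    have h2l : (2 : ZMod p) * l ≠ 0 := mul_ne_zero htwo hl
    calc ∏ j, |Real.cos (2 * π * (((l * b j).val : ℝ)) / p)|
        ≤ ∏ j, Real.exp (-(2 * distRZ ((((2 * (l * b j) : ZMod p)).val : ℝ) / p) ^ 2)) := by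
          apply Finset.prod_le_prod
          · intro j _; positivity
          · intro j _; exact abs_cos_le_exp (l * b j)
      _ = Real.exp (∑ j, -(2 * distRZ ((((2 * (l * b j) : ZMod p)).val : ℝ) / p) ^ 2)) := by
          rw [Real.exp_sum]
      _ ≤ Real.exp (-(∑ j, distRZ (((((2 * l : ZMod p)) * b j).val : ℝ) / p) ^ 2)) := by
          apply Real.exp_le_exp.mpr
          rw [← Finset.sum_neg_distrib]
          apply Finset.sum_le_sum
          intro j _
          rw [mul_assoc]
          nlinarith [sq_nonneg (distRZ ((((2 * (l * b j) : ZMod p)).val : ℝ) / p)),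
            abs_nonneg ((((2 * (l * b j) : ZMod p)).val : ℝ) / p - round ((((2 * (l * b j) : ZMod p)).val : ℝ) / p))]
      _ ≤ E := le_ciSup hbdd ⟨2 * l, h2l⟩
  calc (1 / (p : ℝ)) * ∑ l ∈ Finset.univ.filter (fun l : ZMod p => l ≠ 0),
        ∏ j, |Real.cos (2 * π * (((l * b j).val : ℝ)) / p)|
      ≤ (1 / (p : ℝ)) * ∑ l ∈ Finset.univ.filter (fun l : ZMod p => l ≠ 0), E := by
        apply mul_le_mul_of_nonneg_left _ (by positivity)
        exact Finset.sum_le_sum fun l hl => hterm l (Finset.mem_filter.mp hl).2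
    _ = (1 / (p : ℝ)) * ((Finset.univ.filter (fun l : ZMod p => l ≠ 0)).card : ℝ) * E := by
        rw [Finset.sum_const, nsmul_eq_mul]; ring
    _ ≤ (1 / (p : ℝ)) * (p : ℝ) * E := by
        apply mul_le_mul_of_nonneg_right _ hE0
        apply mul_le_mul_of_nonneg_left _ (by positivity)
        calc ((Finset.univ.filter (fun l : ZMod p => l ≠ 0)).card : ℝ)
            ≤ ((Finset.univ : Finset (ZMod p)).card : ℝ) := by
              exact_mod_cast Finset.card_le_card (Finset.filter_subset _ _)
          _ = (p : ℝ) := by rw [Finset.card_univ, ZMod.card]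
    _ = E := by
        rw [one_div, inv_mul_cancel₀ (by positivity : (p:ℝ) ≠ 0), one_mul]

end
end

section
/- Let p ≥ 3 be a prime, λ ∈ F_p, v ∈ F_p^n a nonzero vector, S ⊆ {1,…,n}, and let r be an integer with 0 ≤ r ≤ n − |S|. Then the probability that v is orthogonal (over F_p) to at least n − r of the rows of M_n − λ·I_n is at most binom(n, r) · ρ_{F_p}(v|_S)^{n − r − |S|}. -/
open Finset Matrix

noncomputable section

set_option maxHeartbeats 1000000

open Classical

/-- Count of an event, with a pinned (classical) decidability instance. -/
def cnt {α : Type*} [Fintype α] (E : α → Prop) : ℕ :=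
  (@Finset.filter _ E (Classical.decPred E) Finset.univ).card

lemma prob_eq_cnt {Ω : Type*} [Fintype Ω] (E : Ω → Prop) :
    prob E = (cnt E : ℝ) / (Fintype.card Ω : ℝ) := rfl

lemma cnt_eq_nat_card {α : Type*} [Fintype α] (E : α → Prop) :
    cnt E = Nat.card {x // E x} := by
  unfold cnt
  rw [← Fintype.card_subtype, Nat.card_eq_fintype_card]

lemma cnt_congr {α : Type*} [Fintype α] {E F : α → Prop} (h : ∀ x, E x ↔ F x) :
    cnt E = cnt F := by
  have : E = F := funext fun x => propext (h x)
  subst this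
  rfl

lemma prob_nonneg {Ω : Type*} [Fintype Ω] (E : Ω → Prop) : 0 ≤ prob E := by
  unfold prob; positivity

lemma prob_mono {Ω : Type*} [Fintype Ω] {E F : Ω → Prop} (h : ∀ ω, E ω → F ω) :
    prob E ≤ prob F := by
  unfold prob
  gcongr
  exact fun ω => h _ ω

lemma prob_le_one {Ω : Type*} [Fintype Ω] (E : Ω → Prop) : prob E ≤ 1 := by
  unfold prob
  rcases Nat.eq_zero_or_pos (Fintype.card Ω) with h | h
  · simp [h]
  · rw [div_le_one (by positivity)]
    exact_mod_cast (Finset.card_filter_le _ _).trans (by simp)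

lemma prob_exists_le_sum {Ω ι : Type*} [Fintype Ω] (F : Finset ι) (P : ι → Ω → Prop) :
    prob (fun ω => ∃ B ∈ F, P B ω) ≤ ∑ B ∈ F, prob (P B) := by
  unfold prob
  rw [← Finset.sum_div]
  gcongr
  rw [← Nat.cast_sum]
  exact_mod_cast (Finset.card_le_card (fun ω hω => by
      simp only [Finset.mem_filter, Finset.mem_univ, true_and] at hω
      obtain ⟨B, hB, hPB⟩ := hω
      exact Finset.mem_biUnion.2 ⟨B, hB, by simp [hPB]⟩)).trans
      (Finset.card_biUnion_le (s := F) (t := fun B => Finset.univ.filter (P B)))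

lemma cnt_equiv {Ω Ω' : Type*} [Fintype Ω] [Fintype Ω'] (e : Ω' ≃ Ω) (E : Ω → Prop) :
    cnt E = cnt (fun x => E (e x)) := by
  rw [cnt_eq_nat_card, cnt_eq_nat_card]
  exact Nat.card_congr (e.subtypeEquiv (fun x => Iff.rfl)).symm

lemma cnt_prod_eq_sum {A B : Type*} [Fintype A] [Fintype B] (Q : A → B → Prop) :
    cnt (fun x : A × B => Q x.1 x.2) = ∑ b : B, cnt (fun a => Q a b) := by
  rw [cnt_eq_nat_card]
  have e : {x : A × B // Q x.1 x.2} ≃ Σ b : B, {a : A // Q a b} :=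
    ⟨fun x => ⟨x.1.2, x.1.1, x.2⟩, fun y => ⟨(y.2.1, y.1), y.2.2⟩,
      fun ⟨⟨a, b⟩, h⟩ => rfl, fun ⟨b, a, h⟩ => rfl⟩
  rw [Nat.card_congr e]
  rw [show Nat.card (Σ b : B, {a : A // Q a b}) = ∑ b : B, Nat.card {a : A // Q a b} by
    simp [Nat.card_eq_fintype_card, Fintype.card_sigma]]
  exact Finset.sum_congr rfl fun b _ => (cnt_eq_nat_card _).symm

lemma cnt_pi {ι : Type*} [Fintype ι] [DecidableEq ι] {β : ι → Type*} [∀ i, Fintype (β i)]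
    (Q : ∀ i, β i → Prop) :
    cnt (fun f : ∀ i, β i => ∀ i, Q i (f i)) = ∏ i, cnt (Q i) := by
  rw [cnt_eq_nat_card, Nat.card_congr (Equiv.subtypePiEquivPi), Nat.card_pi]
  exact Finset.prod_congr rfl fun i _ => (cnt_eq_nat_card _).symm

lemma rho_nonneg (p : ℕ) {ι : Type*} [Fintype ι] [DecidableEq ι] (w : ι → ZMod p) :
    0 ≤ rho p w := Real.iSup_nonneg fun r => prob_nonneg _

lemma cnt_atom_le {p : ℕ} [NeZero p] {ι : Type*} [Fintype ι] [DecidableEq ι]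
    (w : ι → ZMod p) (c : ZMod p) :
    ((cnt (fun h : ι → Bool => ∑ i, signb (ZMod p) (h i) * w i = c)) : ℝ)
      ≤ rho p w * (Fintype.card (ι → Bool) : ℝ) := by
  have h1 : prob (fun h : ι → Bool => ∑ i, signb (ZMod p) (h i) * w i = c) ≤ rho p w := by
    unfold rho
    exact le_ciSup (f := fun r : ZMod p =>
      prob (fun ξ : ι → Bool => ∑ i, signb (ZMod p) (ξ i) * w i = r))
      (Set.Finite.bddAbove (Set.finite_range _)) c
  rw [prob_eq_cnt] at h1
  have hpos : (0:ℝ) < (Fintype.card (ι → Bool) : ℝ) := by positivity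
  exact (div_le_iff₀ hpos).mp h1


section aux

lemma pair_eq {n : ℕ} {i j i' j' : Fin n} (hne : i ≠ j)
    (h : ((min i j, max i j) : Fin n × Fin n) = (min i' j', max i' j')) :
    (i = i' ∧ j = j') ∨ (i = j' ∧ j = i') := by
  simp only [Prod.mk.injEq] at h
  obtain ⟨h1, h2⟩ := h
  rcases le_total i j with hij | hij <;> rcases le_total i' j' with hij' | hij'
  · rw [min_eq_left hij, min_eq_left hij'] at h1
    rw [max_eq_right hij, max_eq_right hij'] at h2
    exact Or.inl ⟨h1, h2⟩
  · rw [min_eq_left hij, min_eq_right hij'] at h1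
    rw [max_eq_right hij, max_eq_left hij'] at h2
    exact Or.inr ⟨h1, h2⟩
  · rw [min_eq_right hij, min_eq_left hij'] at h1
    rw [max_eq_left hij, max_eq_right hij'] at h2
    exact Or.inr ⟨h2, h1⟩
  · rw [min_eq_right hij, min_eq_right hij'] at h1
    rw [max_eq_left hij, max_eq_left hij'] at h2
    exact Or.inl ⟨h2, h1⟩

variable {n : ℕ} (T S : Finset (Fin n))

/-- The free coordinate pairs: `(min i j, max i j)` with `i ∈ T`, `j ∈ S`. -/
def FreeP : Fin n × Fin n → Prop := fun q => ∃ i ∈ T, ∃ j ∈ S, q = (min i j, max i j)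

lemma ne_of_memTS (hTS : Disjoint T S) {i j : Fin n} (hi : i ∈ T) (hj : j ∈ S) : i ≠ j :=
  fun h => (Finset.disjoint_left.mp hTS hi) (h ▸ hj)

/-- The bijection between `T × S` and the free coordinates. -/
def eFree (hTS : Disjoint T S) : (↥T × ↥S) ≃ {q // FreeP T S q} := by
  refine Equiv.ofBijective
    (fun x => ⟨(min (x.1 : Fin n) (x.2 : Fin n), max (x.1 : Fin n) (x.2 : Fin n)),
      ⟨x.1, x.1.2, x.2, x.2.2, rfl⟩⟩) ⟨?_, ?_⟩
  · rintro ⟨⟨i, hi⟩, ⟨j, hj⟩⟩ ⟨⟨i', hi'⟩, ⟨j', hj'⟩⟩ h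
    have h' := Subtype.ext_iff.mp h
    rcases pair_eq (ne_of_memTS T S hTS hi hj) h' with ⟨h1, h2⟩ | ⟨h1, h2⟩
    · exact Prod.ext (Subtype.ext h1) (Subtype.ext h2)
    · have h1' : i = j' := h1
      exact absurd (h1' ▸ hi) (Finset.disjoint_right.mp hTS hj')
  · rintro ⟨q, i, hi, j, hj, rfl⟩
    exact ⟨(⟨i, hi⟩, ⟨j, hj⟩), rfl⟩

lemma not_freeP (hTS : Disjoint T S) {i j : Fin n} (hi : i ∈ T) (hj : j ∉ S) :
    ¬ FreeP T S (min i j, max i j) := by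
  rintro ⟨i', hi', j', hj', heq⟩
  rcases pair_eq (ne_of_memTS T S hTS hi' hj') heq.symm with ⟨h1, h2⟩ | ⟨h1, h2⟩
  · exact hj (h2 ▸ hj')
  · exact (Finset.disjoint_left.mp hTS hi) (h2 ▸ hj')

/-- The full sample-space decomposition. -/
def Phi (hTS : Disjoint T S) : ((↥T → ↥S → Bool) × ({q // ¬ FreeP T S q} → Bool)) ≃ (Fin n → Fin n → Bool) :=
  (((Equiv.curry ↥T ↥S Bool).symm.trans
      (Equiv.arrowCongr (eFree T S hTS) (Equiv.refl Bool))).prodCongr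
    (Equiv.refl ({q // ¬ FreeP T S q} → Bool))).trans
    ((Equiv.piEquivPiSubtypeProd (FreeP T S) (fun _ => Bool)).symm.trans
      (Equiv.curry (Fin n) (Fin n) Bool))

lemma Phi_apply (hTS : Disjoint T S) (h : ↥T → ↥S → Bool) (g : {q // ¬ FreeP T S q} → Bool) (a b : Fin n) :
    Phi T S hTS (h, g) a b
      = if hq : FreeP T S (a, b)
          then h ((eFree T S hTS).symm ⟨(a, b), hq⟩).1 ((eFree T S hTS).symm ⟨(a, b), hq⟩).2
          else g ⟨(a, b), hq⟩ := by
  simp [Phi, Equiv.piEquivPiSubtypeProd_symm_apply, Equiv.curry, Function.uncurry]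

lemma Phi_apply_free (hTS : Disjoint T S) (h : ↥T → ↥S → Bool) (g : {q // ¬ FreeP T S q} → Bool)
    (i : ↥T) (j : ↥S) :
    Phi T S hTS (h, g) (min (i : Fin n) (j : Fin n)) (max (i : Fin n) (j : Fin n)) = h i j := by
  have hq : FreeP T S (min (i : Fin n) (j : Fin n), max (i : Fin n) (j : Fin n)) :=
    ⟨i, i.2, j, j.2, rfl⟩
  rw [Phi_apply, dif_pos hq]
  have he : (eFree T S hTS).symm ⟨(min (i : Fin n) (j : Fin n), max (i : Fin n) (j : Fin n)), hq⟩
      = (i, j) := by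
    rw [Equiv.symm_apply_eq]
    rfl
  rw [he]

lemma Phi_apply_nonfree (hTS : Disjoint T S) (h : ↥T → ↥S → Bool) (g : {q // ¬ FreeP T S q} → Bool)
    {i j : Fin n} (hi : i ∈ T) (hj : j ∉ S) :
    Phi T S hTS (h, g) (min i j) (max i j)
      = g ⟨(min i j, max i j), not_freeP T S hTS hi hj⟩ := by
  rw [Phi_apply, dif_neg (not_freeP T S hTS hi hj)]

end aux

lemma core_bound {n p : ℕ} [NeZero p] (lam : ZMod p) (v : Fin n → ZMod p)
    (S T : Finset (Fin n)) (hTS : Disjoint T S) :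
    prob (fun ω : Fin n → Fin n → Bool =>
        ∀ i ∈ T, (∑ j, signb (ZMod p) (ω (min i j) (max i j)) * v j) - lam * v i = 0)
      ≤ rho p (fun j : ↥S => v (j : Fin n)) ^ T.card := by
  set ρ := rho p (fun j : ↥S => v (j : Fin n)) with hρdef
  set E : (Fin n → Fin n → Bool) → Prop := fun ω =>
    ∀ i ∈ T, (∑ j, signb (ZMod p) (ω (min i j) (max i j)) * v j) - lam * v i = 0 with hE
  set c : ({q // ¬ FreeP T S q} → Bool) → ↥T → ZMod p := fun g i =>
    lam * v (i : Fin n) - ∑ j ∈ Sᶜ, signb (ZMod p)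
      (Phi T S hTS (fun _ _ => true, g) (min (i : Fin n) j) (max (i : Fin n) j)) * v j with hc
  have hev : ∀ (h : ↥T → ↥S → Bool) (g : {q // ¬ FreeP T S q} → Bool),
      E (Phi T S hTS (h, g)) ↔
        ∀ i : ↥T, ∑ j : ↥S, signb (ZMod p) (h i j) * v (j : Fin n) = c g i := by
    intro h g
    have key : ∀ (i : Fin n) (hi : i ∈ T),
        (((∑ j, signb (ZMod p) (Phi T S hTS (h, g) (min i j) (max i j)) * v j)
            - lam * v i = 0)
          ↔ ∑ j : ↥S, signb (ZMod p) (h ⟨i, hi⟩ j) * v (j : Fin n) = c g ⟨i, hi⟩) := by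
      intro i hi
      have hsplit : (∑ j, signb (ZMod p) (Phi T S hTS (h, g) (min i j) (max i j)) * v j)
          = (∑ j : ↥S, signb (ZMod p) (h ⟨i, hi⟩ j) * v (j : Fin n))
            + ∑ j ∈ Sᶜ, signb (ZMod p)
                (Phi T S hTS (fun _ _ => true, g) (min i j) (max i j)) * v j := by
        rw [← Finset.sum_add_sum_compl S]
        congr 1
        · rw [← Finset.sum_coe_sort S]
          refine Finset.sum_congr rfl fun j _ => ?_
          rw [Phi_apply_free T S hTS h g ⟨i, hi⟩ j]
        · refine Finset.sum_congr rfl fun j hj => ?_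
          have hjS : j ∉ S := by simpa using hj
          rw [Phi_apply_nonfree T S hTS h g hi hjS,
            Phi_apply_nonfree T S hTS (fun _ _ => true) g hi hjS]
      have hcgi : c g ⟨i, hi⟩ = lam * v i - ∑ j ∈ Sᶜ, signb (ZMod p)
          (Phi T S hTS (fun _ _ => true, g) (min i j) (max i j)) * v j := rfl
      rw [hsplit, hcgi]
      exact ⟨fun h0 => eq_sub_iff_add_eq.mpr (sub_eq_zero.mp h0),
        fun h0 => sub_eq_zero.mpr (eq_sub_iff_add_eq.mp h0)⟩
    constructor
    · intro H1 i
      exact (key (i : Fin n) i.2).mp (H1 (i : Fin n) i.2)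
    · intro H1 i hi
      exact (key i hi).mpr (H1 ⟨i, hi⟩)
  have hcount : cnt E
      = ∑ g : ({q // ¬ FreeP T S q} → Bool), ∏ i : ↥T,
          cnt (fun hh : ↥S → Bool =>
            ∑ j : ↥S, signb (ZMod p) (hh j) * v (j : Fin n) = c g i) :=
    calc cnt E
        = cnt (fun x : (↥T → ↥S → Bool) × ({q // ¬ FreeP T S q} → Bool) =>
            E (Phi T S hTS x)) := cnt_equiv (Phi T S hTS) E
      _ = ∑ g : ({q // ¬ FreeP T S q} → Bool),
            cnt (fun h : ↥T → ↥S → Bool => E (Phi T S hTS (h, g))) :=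
          cnt_prod_eq_sum (fun h g => E (Phi T S hTS (h, g)))
      _ = ∑ g : ({q // ¬ FreeP T S q} → Bool), ∏ i : ↥T,
            cnt (fun hh : ↥S → Bool =>
              ∑ j : ↥S, signb (ZMod p) (hh j) * v (j : Fin n) = c g i) := by
          refine Finset.sum_congr rfl fun g _ => ?_
          rw [cnt_congr (fun h => hev h g)]
          exact cnt_pi (fun i (hh : ↥S → Bool) =>
            ∑ j : ↥S, signb (ZMod p) (hh j) * v (j : Fin n) = c g i)
  have hρ0 : 0 ≤ ρ := rho_nonneg p _
  have hatom : ∀ (g : ({q // ¬ FreeP T S q} → Bool)) (i : ↥T),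
      ((cnt (fun hh : ↥S → Bool =>
          ∑ j : ↥S, signb (ZMod p) (hh j) * v (j : Fin n) = c g i)) : ℝ)
        ≤ ρ * (Fintype.card (↥S → Bool) : ℝ) :=
    fun g i => cnt_atom_le (fun j : ↥S => v (j : Fin n)) (c g i)
  have hΩ : (Fintype.card (Fin n → Fin n → Bool) : ℝ)
      = (Fintype.card (↥T → ↥S → Bool) : ℝ)
        * (Fintype.card ({q // ¬ FreeP T S q} → Bool) : ℝ) := by
    rw [← Fintype.card_congr (Phi T S hTS)]
    push_cast [Fintype.card_prod]
    ring
  have hΩpos : (0:ℝ) < (Fintype.card (Fin n → Fin n → Bool) : ℝ) := by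
    have := Fintype.card_pos (α := Fin n → Fin n → Bool)
    positivity
  have hSB : (0:ℝ) ≤ (Fintype.card (↥S → Bool) : ℝ) := by positivity
  have hH : (Fintype.card (↥T → ↥S → Bool) : ℝ)
      = (Fintype.card (↥S → Bool) : ℝ) ^ T.card := by
    rw [Fintype.card_fun, ← Fintype.card_coe T]
    push_cast
    ring
  have hfinal : (cnt E : ℝ)
      ≤ ρ ^ T.card * (Fintype.card (Fin n → Fin n → Bool) : ℝ) :=
    calc (cnt E : ℝ)
        = ∑ g : ({q // ¬ FreeP T S q} → Bool), ∏ i : ↥T,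
            ((cnt (fun hh : ↥S → Bool =>
              ∑ j : ↥S, signb (ZMod p) (hh j) * v (j : Fin n) = c g i)) : ℝ) := by
          rw [hcount]; push_cast; rfl
      _ ≤ ∑ _g : ({q // ¬ FreeP T S q} → Bool), ∏ _i : ↥T,
            (ρ * (Fintype.card (↥S → Bool) : ℝ)) :=
          Finset.sum_le_sum fun g _ => Finset.prod_le_prod
            (fun i _ => by positivity) (fun i _ => hatom g i)
      _ = (Fintype.card ({q // ¬ FreeP T S q} → Bool) : ℝ)
            * (ρ ^ T.card * (Fintype.card (↥S → Bool) : ℝ) ^ T.card) := by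
          simp [Finset.prod_const, Finset.sum_const, Fintype.card_coe, mul_pow]
      _ = ρ ^ T.card * (Fintype.card (Fin n → Fin n → Bool) : ℝ) := by
          rw [hΩ, hH]; ring
  show prob E ≤ ρ ^ T.card
  rw [prob_eq_cnt, div_le_iff₀ hΩpos]
  exact hfinal

/-- For a fixed nonzero `v ∈ F_p^n`, a set `S` of coordinates and `0 ≤ r ≤ n - |S|`,
the probability that `v` is orthogonal to at least `n - r` rows of `M_n - λ I_n` is
at most `C(n,r)·ρ(v|_S)^{n - r - |S|}`. -/
theorem orthogonal_to_many_rows_probability (n p : ℕ) (hp : p.Prime) (hp3 : 3 ≤ p)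
    (lam : ZMod p) (v : Fin n → ZMod p) (hv : v ≠ 0)
    (S : Finset (Fin n)) (r : ℕ) (hr : r ≤ n - S.card) :
    prob (fun ω : Fin n → Fin n → Bool =>
        n - r ≤ {i | ((symMat (ZMod p) ω
          - lam • (1 : Matrix (Fin n) (Fin n) (ZMod p))) *ᵥ v) i = 0}.ncard)
      ≤ (n.choose r : ℝ) * rho p (fun i : S => v i) ^ (n - r - S.card) := by
  have : NeZero p := ⟨by omega⟩
  set f : Fin n → (Fin n → Fin n → Bool) → ZMod p := fun i ω =>
    ((symMat (ZMod p) ω - lam • (1 : Matrix (Fin n) (Fin n) (ZMod p))) *ᵥ v) i with hfdef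
  have hf : ∀ (ω : Fin n → Fin n → Bool) (i : Fin n),
      f i ω = (∑ j, signb (ZMod p) (ω (min i j) (max i j)) * v j) - lam * v i := by
    intro ω i
    rw [hfdef]
    simp only [Matrix.sub_mulVec, Matrix.smul_mulVec, Matrix.one_mulVec,
      Pi.sub_apply, Pi.smul_apply, smul_eq_mul]
    simp [Matrix.mulVec, dotProduct, symMat]
  have hrn : r ≤ n := le_trans hr (Nat.sub_le _ _)
  have hρ0 : 0 ≤ rho p (fun i : S => v i) := rho_nonneg p _
  -- Step A: union bound over the at-most-r bad rows
  have stepA : ∀ ω : Fin n → Fin n → Bool,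
      (n - r ≤ {i | f i ω = 0}.ncard) →
        ∃ B ∈ Finset.powersetCard r (univ : Finset (Fin n)), ∀ i ∉ B, f i ω = 0 := by
    intro ω h
    classical
    set Z := univ.filter (fun i => f i ω = 0) with hZ
    have hset : {i | f i ω = 0} = ↑Z := by ext x; simp [hZ]
    rw [hset, Set.ncard_coe_finset] at h
    have hcompl : Zᶜ.card ≤ r := by
      rw [Finset.card_compl]
      have : Fintype.card (Fin n) = n := Fintype.card_fin n
      omega
    obtain ⟨B, hZB, hBcard⟩ := Finset.exists_superset_card_eq hcompl
      (by rw [Fintype.card_fin]; exact hrn)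
    refine ⟨B, Finset.mem_powersetCard_univ.mpr hBcard, fun i hiB => ?_⟩
    have : i ∈ Z := by
      by_contra hiZ
      exact hiB (hZB (Finset.mem_compl.mpr hiZ))
    simpa [hZ] using (Finset.mem_filter.mp this).2
  have stepB : prob (fun ω : Fin n → Fin n → Bool => n - r ≤ {i | f i ω = 0}.ncard)
      ≤ ∑ B ∈ Finset.powersetCard r (univ : Finset (Fin n)),
          prob (fun ω : Fin n → Fin n → Bool => ∀ i ∉ B, f i ω = 0) :=
    (prob_mono stepA).trans (prob_exists_le_sum _ _)
  -- Step C : individual bound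
  have stepC : ∀ B ∈ Finset.powersetCard r (univ : Finset (Fin n)),
      prob (fun ω : Fin n → Fin n → Bool => ∀ i ∉ B, f i ω = 0)
        ≤ rho p (fun i : S => v i) ^ (n - r - S.card) := by
    intro B hB
    have hBcard : B.card = r := Finset.mem_powersetCard_univ.mp hB
    have hBc : Bᶜ.card = n - r := by
      rw [Finset.card_compl, hBcard, Fintype.card_fin]
    have hT0 : n - r - S.card ≤ (Bᶜ \ S).card := by
      have := Finset.le_card_sdiff S Bᶜ
      omega
    obtain ⟨T, hTsub, hTcard⟩ := Finset.exists_subset_card_eq hT0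
    have hTS : Disjoint T S := Finset.disjoint_left.mpr fun i hiT =>
      (Finset.mem_sdiff.mp (hTsub hiT)).2
    have hmono : ∀ ω : Fin n → Fin n → Bool, (∀ i ∉ B, f i ω = 0) →
        ∀ i ∈ T, (∑ j, signb (ZMod p) (ω (min i j) (max i j)) * v j) - lam * v i = 0 := by
      intro ω hω i hiT
      rw [← hf]
      have hiB : i ∉ B := by
        have := (Finset.mem_sdiff.mp (hTsub hiT)).1
        exact Finset.mem_compl.mp this
      exact hω i hiB
    calc prob (fun ω : Fin n → Fin n → Bool => ∀ i ∉ B, f i ω = 0)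
        ≤ prob (fun ω : Fin n → Fin n → Bool => ∀ i ∈ T,
            (∑ j, signb (ZMod p) (ω (min i j) (max i j)) * v j) - lam * v i = 0) :=
          prob_mono hmono
      _ ≤ rho p (fun j : ↥S => v (j : Fin n)) ^ T.card := core_bound lam v S T hTS
      _ = rho p (fun i : S => v i) ^ (n - r - S.card) := by rw [hTcard]
  calc prob (fun ω : Fin n → Fin n → Bool => n - r ≤ {i | f i ω = 0}.ncard)
      ≤ ∑ B ∈ Finset.powersetCard r (univ : Finset (Fin n)),
          prob (fun ω : Fin n → Fin n → Bool => ∀ i ∉ B, f i ω = 0) := stepB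
    _ ≤ (Finset.powersetCard r (univ : Finset (Fin n))).card
          • (rho p (fun i : S => v i) ^ (n - r - S.card)) :=
        Finset.sum_le_card_nsmul _ _ _ stepC
    _ = (n.choose r : ℝ) * rho p (fun i : S => v i) ^ (n - r - S.card) := by
        rw [Finset.card_powersetCard, Finset.card_univ, Fintype.card_fin, nsmul_eq_mul]
end
end

section
/- Let F be a field and let M ∈ F^{n×n} be a symmetric matrix of rank r. Then there exists a subset I ⊆ {1,…,n} with |I| = r such that the principal submatrix of M with rows and columns indexed by I is invertible. -/
open Finset Matrix

noncomputable section

/-- A symmetric matrix of rank `r` over a field has an invertible `r × r`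
principal submatrix. -/
theorem exists_invertible_principal_submatrix (F : Type*) [Field F] (n : ℕ)
    (M : Matrix (Fin n) (Fin n) F) (hM : M.IsSymm) :
    ∃ I : Finset (Fin n), I.card = M.rank ∧
      IsUnit (M.submatrix (fun i : I => (i : Fin n)) (fun i : I => (i : Fin n))) := by
  classical
  -- choose a linearly independent spanning subset of the rows of `M`
  obtain ⟨b, hb_sub, hb_span, hb_li⟩ := exists_linearIndependent F (Set.range M)
  have hb_fin : b.Finite := (Set.finite_range M).subset hb_sub
  haveI : Fintype b := hb_fin.fintype
  -- choose row indices realizing the elements of `b`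
  have hchoice : ∀ v : b, ∃ i : Fin n, M i = (v : Fin n → F) := fun v => hb_sub v.2
  choose f hf using hchoice
  have hf_inj : Function.Injective f := fun v w h => by
    apply Subtype.ext; rw [← hf v, ← hf w, h]
  set I : Finset (Fin n) := Finset.univ.image f with hI_def
  -- the rows indexed by `I` span the row space
  have hspan : Submodule.span F (Set.range fun i : I => M (i : Fin n)) =
      Submodule.span F (Set.range M) := by
    apply le_antisymm
    · exact Submodule.span_mono (by rintro _ ⟨i, rfl⟩; exact ⟨(i : Fin n), rfl⟩)
    · rw [← hb_span]
      apply Submodule.span_mono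
      rintro v hv
      refine ⟨⟨f ⟨v, hv⟩, ?_⟩, hf ⟨v, hv⟩⟩
      simp [hI_def]
  -- the cardinality of `I` equals the rank of `M`
  have hcard : I.card = M.rank := by
    rw [hI_def, Finset.card_image_of_injective _ hf_inj, Finset.card_univ,
      M.rank_eq_finrank_span_row, Matrix.row, ← hb_span]
    have := linearIndependent_iff_card_eq_finrank_span.mp hb_li
    rwa [Subtype.range_coe] at this
  refine ⟨I, hcard, ?_⟩
  -- the rows of `M` indexed by `I` are linearly independent
  have hA_li : LinearIndependent F (fun i : I => M (i : Fin n)) := by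
    rw [linearIndependent_iff_card_eq_finrank_span]
    rw [Set.finrank, hspan, show Set.range M = Set.range M.row from rfl, ← M.rank_eq_finrank_span_row, ← hcard, Fintype.card_coe]
  -- `A` = rows of `M` indexed by `I`
  set A : Matrix I (Fin n) F := M.submatrix (fun i : I => (i : Fin n)) id with hA_def
  have hA_rank : A.rank = Fintype.card I := hA_li.rank_matrix
  -- `Aᵀ` = columns of `M` indexed by `I` (using symmetry)
  have hAT : Aᵀ = M.submatrix id (fun i : I => (i : Fin n)) := by
    ext j i
    exact hM.apply _ _
  have hB_rank : (M.submatrix id (fun i : I => (i : Fin n))).rank = Fintype.card I := by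
    rw [← hAT, Matrix.rank_transpose, hA_rank]
  set C : Matrix I I F :=
    M.submatrix (fun i : I => (i : Fin n)) (fun i : I => (i : Fin n)) with hC_def
  -- the projection onto coordinates in `I`
  set π : (Fin n → F) →ₗ[F] (I → F) := LinearMap.funLeft F F (fun i : I => (i : Fin n))
    with hπ_def
  have hCrow : ∀ i : I, C i = π (M (i : Fin n)) := fun i => rfl
  have hBrow : ∀ j : Fin n, (M.submatrix id (fun i : I => (i : Fin n))) j = π (M j) :=
    fun j => rfl
  -- row spans of `C` and of the `n × I` matrix agree
  have hspanC : Submodule.span F (Set.range fun i : I => C i) =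
      Submodule.span F (Set.range (M.submatrix id (fun i : I => (i : Fin n)))) := by
    have h1 : (Set.range fun i : I => C i) = π '' (Set.range fun i : I => M (i : Fin n)) := by
      rw [← Set.range_comp]; rfl
    have h2 : (Set.range (M.submatrix id (fun i : I => (i : Fin n)))) =
        π '' (Set.range M) := by
      show Set.range (⇑π ∘ M.row) = ⇑π '' Set.range M.row; rw [← Set.range_comp]
    rw [h1, h2, Submodule.span_image, Submodule.span_image, hspan]
  -- hence the rows of `C` are linearly independent, so `C` is invertible
  have hC_li : LinearIndependent F (fun i : I => C i) := by
    rw [linearIndependent_iff_card_eq_finrank_span, Set.finrank, hspanC,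
      show Set.range (M.submatrix id (fun i : I => (i : Fin n))) = Set.range (M.submatrix id (fun i : I => (i : Fin n))).row from rfl,
      ← Matrix.rank_eq_finrank_span_row, hB_rank]
  exact Matrix.linearIndependent_rows_iff_isUnit.mp hC_li
end
end

section
/- Let F be a field, let A ∈ F^{t×t} be symmetric, let u ∈ F^t and z ∈ F, and let A' ∈ F^{(t+1)×(t+1)} be the symmetric matrix with top-left block A, last column (u, z), and last row (uᵀ, z). Then: (i) rank(A') = rank(A) + 2 if and only if u does not lie in the column space of A; (ii) rank(A') = rank(A) if and only if there exists w ∈ F^t with Aw = u and wᵀAw = z. -/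
open Finset Matrix

noncomputable section

/-- The `(t+1) × (t+1)` matrix with top-left block `A`, last column `(u, z)` and
last row `(u'ᵀ, z)`. -/
def border {R : Type*} [Ring R] {t : ℕ} (A : Matrix (Fin t) (Fin t) R)
    (u u' : Fin t → R) (z : R) : Matrix (Fin (t + 1)) (Fin (t + 1)) R :=
  Matrix.of fun i j =>
    if hi : (i : ℕ) < t then
      if hj : (j : ℕ) < t then A ⟨i, hi⟩ ⟨j, hj⟩ else u ⟨i, hi⟩
    else
      if hj : (j : ℕ) < t then u' ⟨j, hj⟩ else z

open Submodule Module

private lemma aux_range_snoc {α : Type*} {n : ℕ} (f : Fin n → α) (a : α) :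
    Set.range (Fin.snoc f a : Fin (n+1) → α) = insert a (Set.range f) := by
  ext x
  simp only [Set.mem_range, Set.mem_insert_iff]
  constructor
  · rintro ⟨i, rfl⟩
    cases i using Fin.lastCases with
    | last => left; simp
    | cast j => right; exact ⟨j, by simp⟩
  · rintro (rfl | ⟨j, rfl⟩)
    · exact ⟨Fin.last n, by simp⟩
    · exact ⟨j.castSucc, by simp⟩

private lemma aux_finrank_span_insert {F : Type*} [Field F] {V : Type*} [AddCommGroup V] [Module F V]
    [FiniteDimensional F V] {s : Set V} {x : V} (hx : x ∉ span F s) :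
    finrank F (span F (insert x s)) = finrank F (span F s) + 1 := by
  have hx0 : x ≠ 0 := fun h => hx (h ▸ (span F s).zero_mem)
  have hdisj : Disjoint (span F s) (span F {x}) :=
    (Submodule.disjoint_span_singleton' hx0).mpr hx
  have h := Submodule.finrank_sup_add_finrank_inf_eq (span F {x}) (span F s)
  rw [hdisj.symm.eq_bot, finrank_bot, add_zero, finrank_span_singleton hx0] at h
  rw [Submodule.span_insert, h]
  omega

private def snocMap {F : Type*} [Field F] {t : ℕ} (w : Fin t → F) : (Fin t → F) →ₗ[F] (Fin (t+1) → F) where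
  toFun v := Fin.snoc v (w ⬝ᵥ v)
  map_add' a b := by
    funext i
    cases i using Fin.lastCases with
    | last => simp [dotProduct_add]
    | cast j => simp
  map_smul' c a := by
    funext i
    cases i using Fin.lastCases with
    | last => simp [dotProduct_smul]
    | cast j => simp

private lemma snocMap_injective {F : Type*} [Field F] {t : ℕ} (w : Fin t → F) : Function.Injective (snocMap w) := by
  intro a b h
  funext j
  have := congrFun h j.castSucc
  simpa [snocMap] using this


/-- For a symmetric matrix `A` bordered symmetrically by `(u, z)`: the rank
increases by `2` iff `u` is outside the column space of `A`, and the rank stays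
the same iff `u = Aw` for some `w` with `wᵀAw = z`. -/
theorem rank_border_symmetric (F : Type*) [Field F] (t : ℕ)
    (A : Matrix (Fin t) (Fin t) F) (hA : A.IsSymm) (u : Fin t → F) (z : F) :
    ((border A u u z).rank = A.rank + 2 ↔ ¬∃ w : Fin t → F, A *ᵥ w = u) ∧
    ((border A u u z).rank = A.rank ↔
      ∃ w : Fin t → F, A *ᵥ w = u ∧ w ⬝ᵥ (A *ᵥ w) = z) := by
  classical
  have hAT : Aᵀ = A := hA
  have hAs : ∀ i j, A i j = A j i := fun i j => (congrFun (congrFun hAT i) j).symm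
  set M := border A u u z with hMdef
  set c : Fin (t+1) → F := Fin.snoc u z with hc
  set g : Fin t → (Fin (t+1) → F) := fun j => Fin.snoc (fun k => A j k) (u j) with hg
  -- rows of M
  have hMfun : (fun i => M i) = Fin.snoc g c := by
    funext i j
    cases i using Fin.lastCases with
    | last =>
      cases j using Fin.lastCases with
      | last => simp [hMdef, border, hc]
      | cast j0 => simp [hMdef, border, hc]
    | cast i0 =>
      cases j using Fin.lastCases with
      | last => simp [hMdef, border, hg]
      | cast j0 => simp [hMdef, border, hg]
  -- M is symmetric
  have hMsymm : Mᵀ = M := by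
    ext i j
    show M j i = M i j
    by_cases hi : (i : ℕ) < t <;> by_cases hj : (j : ℕ) < t <;>
      simp [hMdef, border, hi, hj, hAs]
  have hrangeM : Set.range M = insert c (Set.range g) := by
    rw [← aux_range_snoc g c, ← hMfun]
  have hrank : M.rank = finrank F (span F (insert c (Set.range g))) := by
    rw [Matrix.rank_eq_finrank_span_cols, Matrix.col, hMsymm, hrangeM]
  have hrangeA : Set.range (fun i => A i) = Set.range Aᵀ := by
    rw [hAT]
  set pA : Submodule F (Fin t → F) := span F (Set.range (fun i => A i)) with hpA
  have hfrA : finrank F pA = A.rank := by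
    rw [Matrix.rank_eq_finrank_span_cols, hpA, hrangeA, Matrix.col]
  have humem : (∃ w, A *ᵥ w = u) ↔ u ∈ pA := by
    rw [hpA, hrangeA, show Set.range Aᵀ = Set.range A.col from rfl, ← Matrix.range_mulVecLin]
    constructor
    · rintro ⟨w, hw⟩; exact ⟨w, hw⟩
    · rintro ⟨w, hw⟩; exact ⟨w, hw⟩
  by_cases hex : ∃ w, A *ᵥ w = u
  · obtain ⟨w, hw⟩ := hex
    have huj : ∀ j, w ⬝ᵥ (fun k => A j k) = u j := by
      intro j
      rw [← hw]
      simp [mulVec, dotProduct, mul_comm]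
    have hSrange : Set.range g = (snocMap w) '' (Set.range (fun i => A i)) := by
      rw [← Set.range_comp]
      apply congrArg
      funext j
      show g j = Fin.snoc (fun k => A j k) (w ⬝ᵥ (fun k => A j k))
      rw [hg, huj j]
    have hspanS : span F (Set.range g) = Submodule.map (snocMap w) pA := by
      rw [hSrange, Submodule.span_image, hpA]
    have hfrS : finrank F (span F (Set.range g)) = A.rank := by
      rw [hspanS, ← hfrA]
      exact (LinearEquiv.finrank_eq
        (Submodule.equivMapOfInjective (snocMap w) (snocMap_injective w) pA)).symm
    have hupA : u ∈ pA := humem.mp ⟨w, hw⟩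
    by_cases hz : z = w ⬝ᵥ u
    · -- rank M = rank A
      have hcmem : c ∈ span F (Set.range g) := by
        rw [hspanS]
        refine Submodule.mem_map.mpr ⟨u, hupA, ?_⟩
        show (Fin.snoc u (w ⬝ᵥ u) : Fin (t+1) → F) = c
        rw [hc, hz]
      have hrM : M.rank = A.rank := by
        rw [hrank, Submodule.span_insert_eq_span hcmem, hfrS]
      refine ⟨⟨fun h => ?_, fun h => absurd ⟨w, hw⟩ h⟩,
        fun _ => ⟨w, hw, by rw [hw]; exact hz.symm⟩, fun _ => hrM⟩
      exfalso; omega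
    · -- rank M = rank A + 1
      have hnoW : ¬∃ w' : Fin t → F, A *ᵥ w' = u ∧ w' ⬝ᵥ (A *ᵥ w') = z := by
        rintro ⟨w', hw', hz'⟩
        apply hz
        rw [hw'] at hz'
        have heq : w' ⬝ᵥ u = w ⬝ᵥ u := by
          rw [← hw, Matrix.dotProduct_mulVec, ← Matrix.mulVec_transpose, hAT, hw',
            dotProduct_comm, hw]
        rw [← hz', heq]
      have hcnot : c ∉ span F (Set.range g) := by
        rw [hspanS]
        rintro hmem
        obtain ⟨v, -, hv⟩ := Submodule.mem_map.mp hmem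
        have hvu : v = u := by
          funext j
          have := congrFun hv j.castSucc
          simpa [snocMap, hc] using this
        apply hz
        have := congrFun hv (Fin.last t)
        simp only [snocMap, LinearMap.coe_mk, AddHom.coe_mk, Fin.snoc_last, hc, hvu] at this
        rw [← this]
      have hrM : M.rank = A.rank + 1 := by
        rw [hrank, aux_finrank_span_insert hcnot, hfrS]
      refine ⟨⟨fun h => ?_, fun h => absurd ⟨w, hw⟩ h⟩,
        ⟨fun h => ?_, fun h => absurd h hnoW⟩⟩
      · exfalso; omega
      · exfalso; omega
  · -- u not in column space
    have hu : u ∉ pA := fun h => hex (humem.mpr h)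
    set N : Matrix (Fin t) (Fin (t+1)) F := Matrix.of g with hN
    have hNT : (fun k => Nᵀ k) = Fin.snoc (fun k j => A k j) u := by
      funext k
      cases k using Fin.lastCases with
      | last =>
        funext j
        simp [hN, hg]
      | cast k0 =>
        funext j
        simp [hN, hg, hAs j k0]
    have hfrS : finrank F (span F (Set.range g)) = A.rank + 1 := by
      have e1 : finrank F (span F (Set.range g)) = Nᵀ.rank := by
        rw [Matrix.rank_eq_finrank_span_cols, Matrix.col, transpose_transpose]
        rfl
      have e2 : Set.range Nᵀ = insert u (Set.range (fun i => A i)) := by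
        rw [← aux_range_snoc (fun k j => A k j) u, ← hNT]
      rw [e1, Matrix.rank_transpose, Matrix.rank_eq_finrank_span_cols, Matrix.col, e2,
        aux_finrank_span_insert hu, hfrA]
    have hcnot : c ∉ span F (Set.range g) := by
      intro hmem
      rw [mem_span_range_iff_exists_fun F] at hmem
      obtain ⟨y, hy⟩ := hmem
      apply hex
      refine ⟨y, ?_⟩
      funext i
      have h1 := congrFun hy (Fin.castSucc i)
      simp only [Finset.sum_apply, Pi.smul_apply, hg, Fin.snoc_castSucc, smul_eq_mul, hc,
        Fin.snoc_castSucc] at h1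
      rw [show (A *ᵥ y) i = ∑ j, A i j * y j from rfl, ← h1]
      exact Finset.sum_congr rfl fun j _ => by rw [hAs i j, mul_comm]
    have hrM : M.rank = A.rank + 2 := by
      rw [hrank, aux_finrank_span_insert hcnot, hfrS]
    refine ⟨⟨fun _ => hex, fun _ => hrM⟩, ⟨fun h => ?_, fun h => ?_⟩⟩
    · exfalso; omega
    · obtain ⟨w, hw, -⟩ := h; exact absurd ⟨w, hw⟩ hex
end
end

section
/- Let p be a prime, v ∈ F_p^n, let ξ be uniform on {−1,1}^n, and let S_1, …, S_q be pairwise disjoint subsets of {1,…,n}. Then |E[exp(2πi·((ξ·v)^)/p)]| ≤ ∏_{ℓ=1}^{q} (p · disc_{F_p}(v|_{S_ℓ})), where w^ ∈ {0,…,p−1} is the standard integer representative of w ∈ F_p and ξ·v is the F_p dot product. -/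
open Finset Matrix

noncomputable section

/-- `E[exp(2πi·(ξ·w)^/p)]` for a uniformly random sign vector `ξ`, where `(·)^`
is the standard integer representative in `{0, …, p-1}`. -/
def expE {ι : Type*} [Fintype ι] [DecidableEq ι] (p : ℕ) (w : ι → ZMod p) : ℂ :=
  (∑ ξ : ι → Bool,
      Complex.exp (2 * Real.pi * Complex.I *
        ((∑ i, signb (ZMod p) (ξ i) * w i).val : ℂ) / (p : ℂ))) /
    (Fintype.card (ι → Bool) : ℂ)

namespace Aux

def chi (p : ℕ) (w : ZMod p) : ℂ :=
  Complex.exp (2 * Real.pi * Complex.I * (w.val : ℂ) / (p : ℂ))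

lemma chi_rw (p : ℕ) (w : ZMod p) :
    chi p w = Complex.exp (((2 * Real.pi * w.val / p : ℝ) : ℂ) * Complex.I) := by
  unfold chi; congr 1; push_cast; ring

lemma abs_chi (p : ℕ) (w : ZMod p) : ‖chi p w‖ = 1 := by
  rw [chi_rw]; exact Complex.norm_exp_ofReal_mul_I _

lemma chi_add (p : ℕ) [NeZero p] (a b : ZMod p) :
    chi p (a + b) = chi p a * chi p b := by
  have hp : (p : ℂ) ≠ 0 := Nat.cast_ne_zero.mpr (NeZero.ne p)
  have h : a.val + b.val = (a + b).val + p * ((a.val + b.val) / p) := by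
    rw [ZMod.val_add]; exact (Nat.mod_add_div _ _).symm
  have hc : ((a.val : ℂ) + (b.val : ℂ))
      = ((a + b).val : ℂ) + (p : ℂ) * (((a.val + b.val) / p : ℕ) : ℂ) := by
    exact_mod_cast congrArg (Nat.cast : ℕ → ℂ) h
  unfold chi
  rw [← Complex.exp_add]
  set k : ℕ := (a.val + b.val) / p with hk
  have e1 : 2 * Real.pi * Complex.I * ((a + b).val : ℂ) / p
      = (2 * Real.pi * Complex.I * (a.val : ℂ) + 2 * Real.pi * Complex.I * (b.val : ℂ)
          - (k : ℂ) * (2 * Real.pi * Complex.I) * p) / p := by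
    rw [div_eq_div_iff hp hp]
    linear_combination (2 * (Real.pi : ℂ) * Complex.I * (p : ℂ)) * hc.symm
  have key : 2 * Real.pi * Complex.I * ((a + b).val : ℂ) / p
      = 2 * Real.pi * Complex.I * (a.val : ℂ) / p + 2 * Real.pi * Complex.I * (b.val : ℂ) / p
        - (k : ℂ) * (2 * Real.pi * Complex.I) := by
    rw [e1, sub_div, add_div, mul_div_cancel_right₀ _ hp]
  rw [key, Complex.exp_sub, Complex.exp_nat_mul, Complex.exp_two_pi_mul_I, one_pow, div_one]

lemma sum_chi (p : ℕ) [NeZero p] (hp : 1 < p) : ∑ x : ZMod p, chi p x = 0 := by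
  have hprim := Complex.isPrimitiveRoot_exp p (by omega)
  have hsum := hprim.geom_sum_eq_zero hp
  have key : ∀ x : ZMod p, chi p x = Complex.exp (2 * Real.pi * Complex.I / p) ^ x.val := by
    intro x
    rw [← Complex.exp_nat_mul]
    unfold chi; congr 1; ring
  calc ∑ x : ZMod p, chi p x
      = ∑ k ∈ Finset.range p, Complex.exp (2 * Real.pi * Complex.I / p) ^ k := by
        refine Finset.sum_bij' (fun x _ => x.val) (fun k _ => (k : ZMod p)) ?_ ?_ ?_ ?_ ?_
        · intro x _; exact Finset.mem_range.mpr (ZMod.val_lt x)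
        · intro k _; exact Finset.mem_univ _
        · intro x _; show ((x.val : ZMod p)) = x; rw [ZMod.natCast_val, ZMod.cast_id]
        · intro k hk; show ((k : ZMod p)).val = k
          exact ZMod.val_cast_of_lt (Finset.mem_range.mp hk)
        · intro x _; exact key x
    _ = 0 := hsum

end Aux

section Indep

variable {ι : Type*} [Fintype ι] [DecidableEq ι]

lemma sum_mul_indep (A : Finset ι) (f g : (ι → Bool) → ℂ)
    (hf : ∀ ξ η : ι → Bool, (∀ i ∈ A, ξ i = η i) → f ξ = f η)
    (hg : ∀ ξ η : ι → Bool, (∀ i ∉ A, ξ i = η i) → g ξ = g η) :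
    (∑ ξ : ι → Bool, f ξ * g ξ) * (Fintype.card (ι → Bool) : ℂ)
      = (∑ ξ : ι → Bool, f ξ) * (∑ ξ : ι → Bool, g ξ) := by
  classical
  set e := Equiv.piEquivPiSubtypeProd (fun i : ι => i ∈ A) (fun _ => Bool) with he
  set F : ({i : ι // i ∈ A} → Bool) → ℂ := fun α => f (e.symm (α, fun _ => false)) with hF
  set G : ({i : ι // ¬ i ∈ A} → Bool) → ℂ := fun β => g (e.symm (fun _ => false, β)) with hG
  have hfe : ∀ z : ({i : ι // i ∈ A} → Bool) × ({i : ι // ¬ i ∈ A} → Bool),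
      f (e.symm z) = F z.1 := by
    intro z
    apply hf
    intro i hi
    simp [he, Equiv.piEquivPiSubtypeProd, hi]
  have hge : ∀ z : ({i : ι // i ∈ A} → Bool) × ({i : ι // ¬ i ∈ A} → Bool),
      g (e.symm z) = G z.2 := by
    intro z
    apply hg
    intro i hi
    simp [he, Equiv.piEquivPiSubtypeProd, hi]
  have c1 : (Fintype.card (ι → Bool) : ℂ)
      = (Fintype.card ({i : ι // i ∈ A} → Bool) : ℂ)
        * (Fintype.card ({i : ι // ¬ i ∈ A} → Bool) : ℂ) := by
    rw [← Nat.cast_mul]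
    congr 1
    rw [Fintype.card_congr e, Fintype.card_prod]
  have hfg : ∑ ξ : ι → Bool, f ξ * g ξ = (∑ α, F α) * (∑ β, G β) := by
    rw [← Equiv.sum_comp e.symm (fun ξ => f ξ * g ξ), Fintype.sum_prod_type]
    rw [Finset.sum_mul_sum]
    exact Finset.sum_congr rfl fun α _ => Finset.sum_congr rfl fun β _ => by
      rw [hfe (α, β), hge (α, β)]
  have hsf : ∑ ξ : ι → Bool, f ξ
      = (Fintype.card ({i : ι // ¬ i ∈ A} → Bool) : ℂ) * ∑ α, F α := by
    rw [← Equiv.sum_comp e.symm (fun ξ => f ξ), Fintype.sum_prod_type]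
    simp only [hfe]
    simp [Finset.sum_const, Finset.card_univ, mul_comm, Finset.mul_sum]
  have hsg : ∑ ξ : ι → Bool, g ξ
      = (Fintype.card ({i : ι // i ∈ A} → Bool) : ℂ) * ∑ β, G β := by
    rw [← Equiv.sum_comp e.symm (fun ξ => g ξ), Fintype.sum_prod_type]
    simp only [hge]
    simp [Finset.sum_const, Finset.card_univ, mul_comm, Finset.mul_sum]
  rw [hfg, hsf, hsg, c1]
  ring

lemma sum_restrict (A : Finset ι) (F : ({i : ι // i ∈ A} → Bool) → ℂ) :
    ∑ ξ : ι → Bool, F (fun i => ξ i)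
      = (Fintype.card ({i : ι // ¬ i ∈ A} → Bool) : ℂ) * ∑ α, F α := by
  classical
  set e := Equiv.piEquivPiSubtypeProd (fun i : ι => i ∈ A) (fun _ => Bool) with he
  rw [← Equiv.sum_comp e.symm (fun ξ => F (fun i => ξ i)), Fintype.sum_prod_type]
  have hfe : ∀ z : ({i : ι // i ∈ A} → Bool) × ({i : ι // ¬ i ∈ A} → Bool),
      F (fun i => e.symm z i) = F z.1 := by
    intro z
    congr 1
    funext i
    simp [he, Equiv.piEquivPiSubtypeProd, i.2]
  simp only [hfe]
  simp [Finset.sum_const, Finset.card_univ, mul_comm, Finset.mul_sum]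

end Indep

namespace Aux

lemma disc_nonneg (p : ℕ) {ι : Type*} [Fintype ι] [DecidableEq ι] (w : ι → ZMod p) :
    0 ≤ disc p w :=
  Real.iSup_nonneg fun _ => abs_nonneg _

lemma le_disc (p : ℕ) [NeZero p] {ι : Type*} [Fintype ι] [DecidableEq ι] (w : ι → ZMod p)
    (x : ZMod p) :
    |prob (fun ξ : ι → Bool => ∑ i, signb (ZMod p) (ξ i) * w i = x) - 1 / (p : ℝ)|
      ≤ disc p w := by
  unfold disc
  exact le_ciSup (f := fun x : ZMod p =>
    |prob (fun ξ : ι → Bool => ∑ i, signb (ZMod p) (ξ i) * w i = x) - 1 / (p : ℝ)|)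
    (Set.Finite.bddAbove (Set.finite_range _)) x

lemma chunk_bound {ι : Type*} [Fintype ι] [DecidableEq ι] (p : ℕ) (hp : p.Prime)
    (w : ι → ZMod p) :
    ‖(∑ α : ι → Bool, chi p (∑ i, signb (ZMod p) (α i) * w i)) /
      (Fintype.card (ι → Bool) : ℂ)‖ ≤ (p : ℝ) * disc p w := by
  classical
  haveI : NeZero p := ⟨hp.ne_zero⟩
  set X : (ι → Bool) → ZMod p := fun α => ∑ i, signb (ZMod p) (α i) * w i with hX
  have h1 : ∑ α : ι → Bool, chi p (X α)
      = ∑ x : ZMod p, ((Finset.univ.filter (fun α => X α = x)).card : ℂ) * chi p x := by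
    rw [← Finset.sum_fiberwise Finset.univ X (fun α => chi p (X α))]
    refine Finset.sum_congr rfl fun x _ => ?_
    have : ∀ α ∈ Finset.univ.filter (fun α => X α = x), chi p (X α) = chi p x := by
      intro α hα
      rw [(Finset.mem_filter.mp hα).2]
    rw [Finset.sum_congr rfl this, Finset.sum_const, nsmul_eq_mul]
  have hprob : ∀ x : ZMod p, ((prob (fun α : ι → Bool => X α = x) : ℝ) : ℂ)
      = ((Finset.univ.filter (fun α => X α = x)).card : ℂ)
          / (Fintype.card (ι → Bool) : ℂ) := by
    intro x
    unfold prob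
    rw [Complex.ofReal_div]
    norm_cast
    rw [Finset.filter_congr_decidable]
  have h2 : (∑ α : ι → Bool, chi p (X α)) / (Fintype.card (ι → Bool) : ℂ)
      = ∑ x : ZMod p, ((prob (fun α : ι → Bool => X α = x) : ℝ) : ℂ) * chi p x := by
    rw [h1, Finset.sum_div]
    refine Finset.sum_congr rfl fun x _ => ?_
    rw [hprob x]; ring
  have h0 : ∑ x : ZMod p, ((1 / (p : ℝ) : ℝ) : ℂ) * chi p x = 0 := by
    rw [← Finset.mul_sum, sum_chi p hp.one_lt, mul_zero]
  have h3 : (∑ α : ι → Bool, chi p (X α)) / (Fintype.card (ι → Bool) : ℂ)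
      = ∑ x : ZMod p,
          ((prob (fun α : ι → Bool => X α = x) - 1 / (p : ℝ) : ℝ) : ℂ) * chi p x := by
    rw [h2, ← sub_zero (∑ x : ZMod p, _), ← h0, ← Finset.sum_sub_distrib]
    refine Finset.sum_congr rfl fun x _ => ?_
    push_cast
    ring
  rw [h3]
  calc ‖∑ x : ZMod p,
        ((prob (fun α : ι → Bool => X α = x) - 1 / (p : ℝ) : ℝ) : ℂ) * chi p x‖
      ≤ ∑ x : ZMod p, ‖
          (((prob (fun α : ι → Bool => X α = x) - 1 / (p : ℝ) : ℝ) : ℂ) * chi p x)‖ := by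
        exact norm_sum_le _ _
    _ = ∑ x : ZMod p, |prob (fun α : ι → Bool => X α = x) - 1 / (p : ℝ)| := by
        refine Finset.sum_congr rfl fun x _ => ?_
        rw [norm_mul, abs_chi, mul_one, Complex.norm_real, Real.norm_eq_abs]
    _ ≤ ∑ _x : ZMod p, disc p w := by
        refine Finset.sum_le_sum fun x _ => ?_
        exact le_disc p w x
    _ = (p : ℝ) * disc p w := by
        rw [Finset.sum_const, Finset.card_univ, ZMod.card, nsmul_eq_mul]

end Aux

namespace Aux

def Gv (p : ℕ) {n : ℕ} (v : Fin n → ZMod p) (T : Finset (Fin n)) : ℂ :=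
  (∑ ξ : Fin n → Bool, chi p (∑ i ∈ T, signb (ZMod p) (ξ i) * v i)) /
    (Fintype.card (Fin n → Bool) : ℂ)

lemma expE_eq_Gv (p : ℕ) {n : ℕ} (v : Fin n → ZMod p) :
    expE p v = Gv p v Finset.univ := rfl

lemma Gv_union (p : ℕ) [NeZero p] {n : ℕ} (v : Fin n → ZMod p) {A B : Finset (Fin n)}
    (hAB : Disjoint A B) : Gv p v (A ∪ B) = Gv p v A * Gv p v B := by
  classical
  have key := sum_mul_indep A (fun ξ => chi p (∑ i ∈ A, signb (ZMod p) (ξ i) * v i))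
    (fun ξ => chi p (∑ i ∈ B, signb (ZMod p) (ξ i) * v i))
    (fun ξ η h => congrArg (chi p)
      (Finset.sum_congr rfl fun i hi => by rw [h i hi]))
    (fun ξ η h => congrArg (chi p)
      (Finset.sum_congr rfl fun i hi => by
        rw [h i (fun hiA => Finset.disjoint_left.mp hAB hiA hi)]))
  have hnum : ∑ ξ : Fin n → Bool, chi p (∑ i ∈ A ∪ B, signb (ZMod p) (ξ i) * v i)
      = ∑ ξ : Fin n → Bool, chi p (∑ i ∈ A, signb (ZMod p) (ξ i) * v i)
          * chi p (∑ i ∈ B, signb (ZMod p) (ξ i) * v i) := by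
    refine Finset.sum_congr rfl fun ξ _ => ?_
    rw [Finset.sum_union hAB, chi_add]
  have hc : (Fintype.card (Fin n → Bool) : ℂ) ≠ 0 :=
    Nat.cast_ne_zero.mpr Fintype.card_ne_zero
  unfold Gv
  rw [hnum, div_mul_div_comm, ← key]
  field_simp

lemma Gv_abs_le_one (p : ℕ) {n : ℕ} (v : Fin n → ZMod p) (T : Finset (Fin n)) :
    ‖Gv p v T‖ ≤ 1 := by
  unfold Gv
  rw [norm_div, Complex.norm_natCast]
  have hc : (0 : ℝ) < (Fintype.card (Fin n → Bool) : ℝ) := by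
    exact_mod_cast Fintype.card_pos
  rw [div_le_one hc]
  calc ‖∑ ξ : Fin n → Bool, chi p (∑ i ∈ T, signb (ZMod p) (ξ i) * v i)‖
      ≤ ∑ ξ : Fin n → Bool, ‖chi p (∑ i ∈ T, signb (ZMod p) (ξ i) * v i)‖ :=
        norm_sum_le _ _
    _ = (Fintype.card (Fin n → Bool) : ℝ) := by
        simp [abs_chi, Finset.card_univ]

lemma Gv_empty (p : ℕ) [NeZero p] {n : ℕ} (v : Fin n → ZMod p) : Gv p v ∅ = 1 := by
  have hc : (Fintype.card (Fin n → Bool) : ℂ) ≠ 0 :=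
    Nat.cast_ne_zero.mpr Fintype.card_ne_zero
  unfold Gv
  simp only [Finset.sum_empty]
  rw [show chi p 0 = 1 by unfold chi; simp [ZMod.val_zero]]
  rw [Finset.sum_const, Finset.card_univ, nsmul_eq_mul, mul_one, div_self hc]

lemma Gv_biUnion (p : ℕ) [NeZero p] {n q : ℕ} (v : Fin n → ZMod p)
    (S : Fin q → Finset (Fin n)) (hS : ∀ a b : Fin q, a ≠ b → Disjoint (S a) (S b))
    (t : Finset (Fin q)) :
    Gv p v (t.biUnion S) = ∏ l ∈ t, Gv p v (S l) := by
  classical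
  induction t using Finset.induction_on with
  | empty => simpa using Gv_empty p v
  | insert a t ha ih =>
    rw [Finset.biUnion_insert, Finset.prod_insert ha, ← ih]
    refine Gv_union p v ?_
    rw [Finset.disjoint_biUnion_right]
    intro i hi
    exact hS a i (by rintro rfl; exact ha hi)

lemma Gv_restrict (p : ℕ) {n : ℕ} (v : Fin n → ZMod p) (A : Finset (Fin n)) :
    Gv p v A = (∑ α : {i : Fin n // i ∈ A} → Bool,
        chi p (∑ i, signb (ZMod p) (α i) * v i)) /
      (Fintype.card ({i : Fin n // i ∈ A} → Bool) : ℂ) := by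
  classical
  have hB : (Fintype.card ({i : Fin n // ¬ i ∈ A} → Bool) : ℂ) ≠ 0 :=
    Nat.cast_ne_zero.mpr Fintype.card_ne_zero
  have h2 : ∑ ξ : Fin n → Bool, chi p (∑ i ∈ A, signb (ZMod p) (ξ i) * v i)
      = (Fintype.card ({i : Fin n // ¬ i ∈ A} → Bool) : ℂ)
          * ∑ α : {i : Fin n // i ∈ A} → Bool,
              chi p (∑ i, signb (ZMod p) (α i) * v i) := by
    rw [← sum_restrict A (fun α : {i : Fin n // i ∈ A} → Bool =>
      chi p (∑ i, signb (ZMod p) (α i) * v i))]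
    refine Finset.sum_congr rfl fun ξ _ => ?_
    congr 1
    exact (Finset.sum_coe_sort A (fun i => signb (ZMod p) (ξ i) * v i)).symm
  have c1 : (Fintype.card (Fin n → Bool) : ℂ)
      = (Fintype.card ({i : Fin n // ¬ i ∈ A} → Bool) : ℂ)
        * (Fintype.card ({i : Fin n // i ∈ A} → Bool) : ℂ) := by
    rw [← Nat.cast_mul]
    congr 1
    rw [Fintype.card_congr (Equiv.piEquivPiSubtypeProd (fun i : Fin n => i ∈ A)
      (fun _ => Bool)), Fintype.card_prod, Nat.mul_comm]
  unfold Gv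
  rw [h2, c1, mul_div_mul_left _ _ hB]

end Aux


/-- The Fourier coefficient of `ξ ↦ ξ·v` factors over pairwise disjoint chunks
`S_1, …, S_q`, with each chunk contributing at most `p · disc(v|_{S_ℓ})`. -/
theorem fourier_coefficient_chunk_bound (p : ℕ) (hp : p.Prime) (n q : ℕ)
    (v : Fin n → ZMod p) (S : Fin q → Finset (Fin n))
    (hS : ∀ a b : Fin q, a ≠ b → Disjoint (S a) (S b)) :
    ‖expE p v‖ ≤ ∏ l : Fin q, ((p : ℝ) * disc p (fun i : S l => v i)) := by
  classical
  haveI : NeZero p := ⟨hp.ne_zero⟩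
  set U : Finset (Fin n) := (Finset.univ : Finset (Fin q)).biUnion S with hU
  have hdisj : Disjoint Uᶜ U := disjoint_compl_left
  have huniv : Uᶜ ∪ U = Finset.univ := by
    rw [Finset.union_comm, Finset.union_compl]
  have hsplit : expE p v = Aux.Gv p v Uᶜ * Aux.Gv p v U := by
    rw [Aux.expE_eq_Gv, ← huniv, Aux.Gv_union p v hdisj]
  have hprod : Aux.Gv p v U = ∏ l : Fin q, Aux.Gv p v (S l) :=
    Aux.Gv_biUnion p v S hS Finset.univ
  rw [hsplit, hprod, norm_mul]
  have hbound : ‖∏ l : Fin q, Aux.Gv p v (S l)‖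
      ≤ ∏ l : Fin q, ((p : ℝ) * disc p (fun i : S l => v i)) := by
    rw [norm_prod]
    refine Finset.prod_le_prod (fun l _ => norm_nonneg _) (fun l _ => ?_)
    rw [Aux.Gv_restrict]
    exact Aux.chunk_bound p hp _
  calc ‖Aux.Gv p v Uᶜ‖ * ‖∏ l : Fin q, Aux.Gv p v (S l)‖
      ≤ 1 * ∏ l : Fin q, ((p : ℝ) * disc p (fun i : S l => v i)) :=
        mul_le_mul (Aux.Gv_abs_le_one p v _) hbound (norm_nonneg _) zero_le_one
    _ = _ := one_mul _
end
end

section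
/- There is an absolute constant c > 0 such that for every odd prime p, every n, and every v ∈ F_p^n, with ξ uniform on {−1,1}^n: |E[exp(2πi·((ξ·v)^)/p)]| = ∏_{j : v_j ≠ 0} |cos(2π·v̂_j/p)| ≤ exp(−c·|supp(v)|/p²), where v̂_j ∈ {0,…,p−1} is the standard integer representative of v_j, w^ is the representative of w ∈ F_p, ξ·v is the F_p dot product, and supp(v) is the set of coordinates where v is nonzero. -/
open Finset Matrix

noncomputable section

namespace FourierAux

/-- `exp(2πi x̂ / p)` as an additive character value. -/
def ep (p : ℕ) (x : ZMod p) : ℂ :=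
  Complex.exp (2 * Real.pi * Complex.I * (x.val : ℂ) / p)

lemma cexp_nat_mod (p : ℕ) (hp : 0 < p) (a : ℕ) :
    Complex.exp (2 * Real.pi * Complex.I * ((a % p : ℕ) : ℂ) / p) =
    Complex.exp (2 * Real.pi * Complex.I * (a : ℂ) / p) := by
  have hpc : (p : ℂ) ≠ 0 := Nat.cast_ne_zero.mpr hp.ne'
  set r := a % p with hr
  set q := a / p with hq
  have ha : a = r + p * q := (Nat.mod_add_div a p).symm
  rw [ha]
  rw [show 2 * (Real.pi : ℂ) * Complex.I * (((r + p * q : ℕ)) : ℂ) / p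
      = 2 * (Real.pi : ℂ) * Complex.I * ((r : ℕ) : ℂ) / p
        + ((q : ℕ) : ℤ) * (2 * Real.pi * Complex.I) by
    push_cast; field_simp]
  rw [Complex.exp_add, Complex.exp_int_mul_two_pi_mul_I, mul_one]

lemma rcos_nat_mod (p : ℕ) (hp : 0 < p) (a : ℕ) :
    Real.cos (2 * Real.pi * ((a % p : ℕ) : ℝ) / p) =
    Real.cos (2 * Real.pi * (a : ℝ) / p) := by
  have hpc : (p : ℝ) ≠ 0 := Nat.cast_ne_zero.mpr hp.ne'
  set r := a % p with hr
  set q := a / p with hq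
  have ha : a = r + p * q := (Nat.mod_add_div a p).symm
  rw [ha]
  rw [show 2 * Real.pi * (((r + p * q : ℕ)) : ℝ) / p
      = 2 * Real.pi * ((r : ℕ) : ℝ) / p
        + ((q : ℕ) : ℤ) * (2 * Real.pi) by
    push_cast; field_simp]
  rw [Real.cos_add_int_mul_two_pi]

lemma ep_add (p : ℕ) [NeZero p] (x y : ZMod p) :
    ep p (x + y) = ep p x * ep p y := by
  unfold ep
  rw [ZMod.val_add, cexp_nat_mod p (NeZero.pos p), ← Complex.exp_add]
  congr 1
  push_cast
  ring

lemma ep_zero (p : ℕ) [NeZero p] : ep p 0 = 1 := by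
  simp [ep]

lemma ep_sum (p : ℕ) [NeZero p] {ι : Type*} (s : Finset ι) (f : ι → ZMod p) :
    ep p (∑ i ∈ s, f i) = ∏ i ∈ s, ep p (f i) := by
  classical
  induction s using Finset.induction with
  | empty => simp [ep_zero]
  | insert _ _ h ih => rw [Finset.sum_insert h, Finset.prod_insert h, ep_add, ih]

lemma ep_real (p : ℕ) (x : ZMod p) :
    ep p x = Complex.exp (((2 * Real.pi * (x.val : ℝ) / p : ℝ) : ℂ) * Complex.I) := by
  unfold ep
  congr 1
  push_cast
  ring

lemma ep_bool_sum (p : ℕ) [NeZero p] (w : ZMod p) :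
    ep p w + ep p (-w) = 2 * ((Real.cos (2 * Real.pi * (w.val : ℝ) / p) : ℝ) : ℂ) := by
  set θ : ℝ := 2 * Real.pi * (w.val : ℝ) / p with hθ
  have h1 : ep p w * ep p (-w) = 1 := by
    rw [← ep_add, add_neg_cancel, ep_zero]
  have h2 : ep p (-w) = Complex.exp (-((θ : ℂ) * Complex.I)) := by
    have hinv : ep p (-w) = (ep p w)⁻¹ := by
      rw [mul_comm] at h1
      exact eq_inv_of_mul_eq_one_left h1
    rw [hinv, ep_real p w, ← Complex.exp_neg]
  rw [ep_real p w, h2, Complex.ofReal_cos, Complex.cos]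
  rw [← hθ]; ring

lemma expE_eq {ι : Type*} [Fintype ι] [DecidableEq ι] (p : ℕ) [NeZero p]
    (v : ι → ZMod p) :
    expE p v = ∏ i, ((Real.cos (2 * Real.pi * (((v i).val : ℝ)) / p) : ℝ) : ℂ) := by
  classical
  have key : ∀ ξ : ι → Bool,
      Complex.exp (2 * Real.pi * Complex.I *
          (((∑ i, signb (ZMod p) (ξ i) * v i).val : ℕ) : ℂ) / p)
        = ∏ i, ep p (signb (ZMod p) (ξ i) * v i) := by
    intro ξ
    rw [← ep_sum]
    rfl
  rw [expE]
  rw [Finset.sum_congr rfl (fun ξ _ => key ξ)]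
  rw [← Fintype.prod_sum (fun i (b : Bool) => ep p (signb (ZMod p) b * v i))]
  have hbool : ∀ i : ι, (∑ b : Bool, ep p (signb (ZMod p) b * v i))
      = 2 * ((Real.cos (2 * Real.pi * (((v i).val : ℝ)) / p) : ℝ) : ℂ) := by
    intro i
    rw [Fintype.sum_bool]
    have : signb (ZMod p) true * v i = v i := by simp [signb]
    have h2 : signb (ZMod p) false * v i = -(v i) := by simp [signb]
    rw [this, h2, ep_bool_sum]
  rw [Finset.prod_congr rfl (fun i _ => hbool i), Finset.prod_mul_distrib,
    Finset.prod_const]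
  have hcard : (Fintype.card (ι → Bool) : ℂ) = 2 ^ Fintype.card ι := by
    rw [Fintype.card_fun]; push_cast; simp
  rw [hcard, Finset.card_univ]
  have h2n : ((2 : ℂ)) ^ Fintype.card ι ≠ 0 :=
    pow_ne_zero _ (by norm_num)
  rw [mul_comm ((2 : ℂ) ^ Fintype.card ι), mul_div_assoc, div_self h2n, mul_one]

lemma cos_le_cos_half (p r : ℕ) (hp : 0 < p) (h1 : 1 ≤ r) (h2 : 2 * r ≤ p) :
    Real.cos (2 * Real.pi * (r : ℝ) / p) ≤ Real.cos (2 * Real.pi / p) := by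
  have hπ := Real.pi_pos
  have hppos : (0 : ℝ) < p := by exact_mod_cast hp
  have hr : (1 : ℝ) ≤ r := by exact_mod_cast h1
  have h2r : (2 : ℝ) * r ≤ p := by exact_mod_cast h2
  apply Real.cos_le_cos_of_nonneg_of_le_pi
  · positivity
  · rw [div_le_iff₀ hppos]
    nlinarith
  · rw [show (2 : ℝ) * Real.pi / p = 2 * Real.pi * 1 / p by ring]
    gcongr

lemma cos_le_cos' (p r : ℕ) (hp : 0 < p) (h1 : 1 ≤ r) (h2 : r < p) :
    Real.cos (2 * Real.pi * (r : ℝ) / p) ≤ Real.cos (2 * Real.pi / p) := by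
  rcases le_or_gt (2 * r) p with h | h
  · exact cos_le_cos_half p r hp h1 h
  · have hppos : (0 : ℝ) < p := by exact_mod_cast hp
    have heq : Real.cos (2 * Real.pi * (r : ℝ) / p)
        = Real.cos (2 * Real.pi * ((p - r : ℕ) : ℝ) / p) := by
      rw [← Real.cos_two_pi_sub]
      congr 1
      rw [Nat.cast_sub h2.le]
      field_simp
    rw [heq]
    exact cos_le_cos_half p (p - r) hp (by omega) (by omega)

lemma abs_cos_le (p : ℕ) (hp : p.Prime) (hodd : Odd p) (k : ℕ)
    (h1 : 1 ≤ k) (h2 : k < p) :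
    |Real.cos (2 * Real.pi * (k : ℝ) / p)| ≤ Real.cos (Real.pi / p) := by
  have hp3 : 3 ≤ p := by
    have h2 := hp.two_le
    rcases hodd with ⟨m, hm⟩
    omega
  have hppos : (0 : ℝ) < p := by exact_mod_cast hp.pos
  have hπ := Real.pi_pos
  set θ : ℝ := 2 * Real.pi * (k : ℝ) / p with hθ
  -- the doubled angle
  have hr0 : (2 * k) % p ≠ 0 := by
    intro h
    have hdvd : p ∣ 2 * k := Nat.dvd_of_mod_eq_zero h
    rcases (Nat.Prime.dvd_mul hp).1 hdvd with h' | h'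
    · have := Nat.le_of_dvd (by norm_num) h'; omega
    · have := Nat.le_of_dvd (by omega) h'; omega
  have hrlt : (2 * k) % p < p := Nat.mod_lt _ hp.pos
  have hcos2 : Real.cos (2 * θ) ≤ Real.cos (2 * Real.pi / p) := by
    have e1 : 2 * θ = 2 * Real.pi * ((2 * k : ℕ) : ℝ) / p := by
      rw [hθ]; push_cast; ring
    rw [e1, ← rcos_nat_mod p hp.pos]
    exact cos_le_cos' p ((2 * k) % p) hp.pos (by omega) hrlt
  -- relate to half angle
  have hhalf : Real.cos (2 * Real.pi / p) = 2 * Real.cos (Real.pi / p) ^ 2 - 1 := by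
    rw [show (2 : ℝ) * Real.pi / p = 2 * (Real.pi / p) by ring, Real.cos_two_mul]
  have hsq : Real.cos θ ^ 2 ≤ Real.cos (Real.pi / p) ^ 2 := by
    have := Real.cos_two_mul θ
    nlinarith
  have hcnn : 0 ≤ Real.cos (Real.pi / p) := by
    apply Real.cos_nonneg_of_mem_Icc
    constructor
    · have : 0 ≤ Real.pi / p := by positivity
      linarith
    · have h2p : (2:ℝ) ≤ p := by exact_mod_cast hp.two_le
      gcongr
  calc |Real.cos θ| = Real.sqrt (Real.cos θ ^ 2) := (Real.sqrt_sq_eq_abs _).symm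
    _ ≤ Real.sqrt (Real.cos (Real.pi / p) ^ 2) := Real.sqrt_le_sqrt hsq
    _ = Real.cos (Real.pi / p) := Real.sqrt_sq hcnn

lemma cos_pi_div_le (p : ℕ) (hp : 3 ≤ p) :
    Real.cos (Real.pi / p) ≤ Real.exp (-2 / (p : ℝ) ^ 2) := by
  have hppos : (0 : ℝ) < p := by exact_mod_cast (by omega : 0 < p)
  have hπ := Real.pi_pos
  have hsin : 1 / (p : ℝ) ≤ Real.sin (Real.pi / (2 * p)) := by
    have h := Real.mul_le_sin (x := Real.pi / (2 * p)) (by positivity)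
      (by
        have h3p : (3:ℝ) ≤ p := by exact_mod_cast hp
        gcongr
        linarith)
    calc 1 / (p : ℝ) = 2 / Real.pi * (Real.pi / (2 * p)) := by
          field_simp
      _ ≤ Real.sin (Real.pi / (2 * p)) := h
  have hcos : Real.cos (Real.pi / p) = 1 - 2 * Real.sin (Real.pi / (2 * p)) ^ 2 := by
    rw [show Real.pi / p = 2 * (Real.pi / (2 * p)) by field_simp,
      Real.cos_two_mul, Real.cos_sq']
    ring
  have hsq : 1 / (p : ℝ) ^ 2 ≤ Real.sin (Real.pi / (2 * p)) ^ 2 := by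
    have h0 : (0:ℝ) ≤ 1 / p := by positivity
    calc 1 / (p : ℝ) ^ 2 = (1 / (p : ℝ)) ^ 2 := by ring
      _ ≤ Real.sin (Real.pi / (2 * p)) ^ 2 := by
          exact pow_le_pow_left₀ h0 hsin 2
  have hexp := Real.add_one_le_exp (-2 / (p : ℝ) ^ 2)
  have hps : (0:ℝ) < (p:ℝ)^2 := by positivity
  rw [hcos]
  have : -2 / (p:ℝ)^2 + 1 = 1 - 2 * (1 / (p:ℝ)^2) := by field_simp; ring
  nlinarith

end FourierAux

open Classical in
/-- The Fourier coefficient of `ξ ↦ ξ·v` over `F_p` equals the product of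
`|cos(2π v̂_j/p)|` over the support of `v`, which is at most
`exp(-c·|supp(v)|/p²)`. -/
theorem fourier_coefficient_support_bound :
    ∃ c : ℝ, 0 < c ∧
      ∀ p : ℕ, p.Prime → Odd p → ∀ n : ℕ, ∀ v : Fin n → ZMod p,
        ‖expE p v‖ =
          ∏ j ∈ Finset.univ.filter (fun j : Fin n => v j ≠ 0),
            |Real.cos (2 * Real.pi * ((v j).val : ℝ) / p)| ∧
        ‖expE p v‖ ≤
          Real.exp (-c * ({j | v j ≠ 0}.ncard : ℝ) / (p : ℝ) ^ 2) := by
  refine ⟨2, by norm_num, fun p hp hodd n v => ?_⟩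
  haveI : NeZero p := ⟨hp.pos.ne'⟩
  have hppos : (0 : ℝ) < p := by exact_mod_cast hp.pos
  have hp3 : 3 ≤ p := by
    have h2 := hp.two_le
    rcases hodd with ⟨m, hm⟩
    omega
  have habs : ‖expE p v‖
      = ∏ j : Fin n, |Real.cos (2 * Real.pi * (((v j).val : ℝ)) / p)| := by
    rw [FourierAux.expE_eq p v, norm_prod]
    exact Finset.prod_congr rfl fun j _ => by rw [Complex.norm_real, Real.norm_eq_abs]
  set S : Finset (Fin n) := Finset.univ.filter (fun j : Fin n => v j ≠ 0) with hS
  have heq : ‖expE p v‖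
      = ∏ j ∈ S, |Real.cos (2 * Real.pi * (((v j).val : ℝ)) / p)| := by
    rw [habs]
    refine (Finset.prod_filter_of_ne ?_).symm
    intro j _ hne
    intro hv0
    apply hne
    rw [hv0]
    simp
  refine ⟨heq, ?_⟩
  have hncard : ({j | v j ≠ 0} : Set (Fin n)).ncard = S.card := by
    classical
    rw [Set.ncard_eq_toFinset_card']
    congr 1
    ext j
    simp [hS]
  have hfac : ∀ j ∈ S, |Real.cos (2 * Real.pi * (((v j).val : ℝ)) / p)|
      ≤ Real.exp (-2 / (p : ℝ) ^ 2) := by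
    intro j hj
    have hvne : v j ≠ 0 := (Finset.mem_filter.1 hj).2
    have h1 : 1 ≤ (v j).val := by
      have : (v j).val ≠ 0 := fun h => hvne ((ZMod.val_eq_zero _).1 h)
      omega
    have h2 : (v j).val < p := ZMod.val_lt _
    exact le_trans (FourierAux.abs_cos_le p hp hodd _ h1 h2)
      (FourierAux.cos_pi_div_le p hp3)
  calc ‖expE p v‖
      = ∏ j ∈ S, |Real.cos (2 * Real.pi * (((v j).val : ℝ)) / p)| := heq
    _ ≤ ∏ j ∈ S, Real.exp (-2 / (p : ℝ) ^ 2) :=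
        Finset.prod_le_prod (fun j _ => abs_nonneg _) hfac
    _ = Real.exp (-2 / (p : ℝ) ^ 2) ^ S.card := Finset.prod_const _
    _ = Real.exp (-2 * (S.card : ℝ) / (p : ℝ) ^ 2) := by
        rw [← Real.exp_nat_mul]
        congr 1
        field_simp
    _ = Real.exp (-2 * (({j | v j ≠ 0} : Set (Fin n)).ncard : ℝ) / (p : ℝ) ^ 2) := by
        rw [hncard]
end
end
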